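/- arXiv:1706.09998 — 8 statements merged into one kernel-verified Lean document; each statement's English description precedes it below -/
import Mathlib

section
/- Let x₁, …, xₙ be points in a real inner product space, let λ > 0, and let S be the n × n matrix with entries S_{ij} = e^{-λ² ‖xᵢ - xⱼ‖²}. Then S is positive semidefinite: for every vector Λ = (λ₁, …, λₙ) ∈ ℝⁿ, we have Λ S Λᵀ ≥ 0. -/
open Finset

lemma gram_pow_nonneg {m n : ℕ} (g : Fin m → Fin n → ℝ) (a : Fin n → ℝ) (k : ℕ) :
    0 ≤ ∑ i, ∑ j, a i * a j * (∑ t, g t i * g t j) ^ k := by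
  have key : ∑ i, ∑ j, a i * a j * (∑ t, g t i * g t j) ^ k
      = ∑ p : Fin k → Fin m, (∑ i, a i * ∏ l, g (p l) i) ^ 2 := by
    have h1 : ∀ i j, (∑ t, g t i * g t j) ^ k
        = ∑ p : Fin k → Fin m, (∏ l, g (p l) i) * (∏ l, g (p l) j) := by
      intro i j
      rw [Fintype.sum_pow]
      exact Finset.sum_congr rfl fun p _ => by rw [Finset.prod_mul_distrib]
    calc ∑ i, ∑ j, a i * a j * (∑ t, g t i * g t j) ^ k
        = ∑ i, ∑ j, ∑ p : Fin k → Fin m,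
            (a i * ∏ l, g (p l) i) * (a j * ∏ l, g (p l) j) := by
          refine Finset.sum_congr rfl fun i _ => Finset.sum_congr rfl fun j _ => ?_
          rw [h1, Finset.mul_sum]
          exact Finset.sum_congr rfl fun p _ => by ring
      _ = ∑ i, ∑ p : Fin k → Fin m, ∑ j,
            (a i * ∏ l, g (p l) i) * (a j * ∏ l, g (p l) j) :=
          Finset.sum_congr rfl fun i _ => Finset.sum_comm
      _ = ∑ p : Fin k → Fin m, ∑ i, ∑ j,
            (a i * ∏ l, g (p l) i) * (a j * ∏ l, g (p l) j) := Finset.sum_comm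
      _ = ∑ p : Fin k → Fin m, (∑ i, a i * ∏ l, g (p l) i) ^ 2 := by
          refine Finset.sum_congr rfl fun p _ => ?_
          rw [sq, Finset.sum_mul_sum]
  rw [key]
  exact Finset.sum_nonneg fun p _ => sq_nonneg _

lemma gram_exp_nonneg {m n : ℕ} (g : Fin m → Fin n → ℝ) (a : Fin n → ℝ) (c : ℝ)
    (hc : 0 ≤ c) :
    0 ≤ ∑ i, ∑ j, a i * a j * Real.exp (c * ∑ t, g t i * g t j) := by
  have hexp : ∀ y : ℝ, Real.exp y = ∑' k : ℕ, y ^ k / k.factorial := by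
    intro y
    rw [Real.exp_eq_exp_ℝ, NormedSpace.exp_eq_tsum_div]
  have hsum : ∀ y : ℝ, Summable (fun k : ℕ => y ^ k / k.factorial) :=
    fun y => Real.summable_pow_div_factorial y
  calc (0:ℝ) ≤ ∑' k : ℕ, ∑ i, ∑ j,
        a i * a j * ((c * ∑ t, g t i * g t j) ^ k / k.factorial) := by
        apply tsum_nonneg
        intro k
        have heq : ∑ i, ∑ j, a i * a j * ((c * ∑ t, g t i * g t j) ^ k / k.factorial)
            = (c ^ k / k.factorial) * ∑ i, ∑ j, a i * a j * (∑ t, g t i * g t j) ^ k := by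
          rw [Finset.mul_sum]
          refine Finset.sum_congr rfl fun i _ => ?_
          rw [Finset.mul_sum]
          refine Finset.sum_congr rfl fun j _ => ?_
          rw [mul_pow]
          ring
        rw [heq]
        exact mul_nonneg (div_nonneg (pow_nonneg hc k) (Nat.cast_nonneg _))
          (gram_pow_nonneg g a k)
    _ = ∑ i, ∑ j, a i * a j * Real.exp (c * ∑ t, g t i * g t j) := by
        have h1 : ∀ i j : Fin n, a i * a j * Real.exp (c * ∑ t, g t i * g t j)
            = ∑' k : ℕ, a i * a j * ((c * ∑ t, g t i * g t j) ^ k / k.factorial) := by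
          intro i j
          rw [hexp, tsum_mul_left]
        simp_rw [h1]
        have h2 : ∀ i : Fin n, ∑ j, ∑' k : ℕ,
            a i * a j * ((c * ∑ t, g t i * g t j) ^ k / k.factorial)
            = ∑' k : ℕ, ∑ j, a i * a j * ((c * ∑ t, g t i * g t j) ^ k / k.factorial) :=
          fun i => (Summable.tsum_finsetSum fun j _ => (hsum _).mul_left _).symm
        simp_rw [h2]
        exact Summable.tsum_finsetSum fun i _ => summable_sum fun j _ => (hsum _).mul_left _

/-- The Gaussian kernel is positive semidefinite on any real inner product space. -/
theorem gaussian_kernel_posSemidef {E : Type*} [NormedAddCommGroup E] [InnerProductSpace ℝ E]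
    (n : ℕ) (x : Fin n → E) (lam : ℝ) (hlam : 0 < lam) (Λ : Fin n → ℝ) :
    0 ≤ ∑ i, ∑ j, Λ i * Λ j * Real.exp (-(lam ^ 2) * ‖x i - x j‖ ^ 2) := by
  classical
  set V := Submodule.span ℝ (Set.range x) with hV
  haveI : FiniteDimensional ℝ V := FiniteDimensional.span_of_finite ℝ (Set.finite_range x)
  set y : Fin n → V := fun i => ⟨x i, Submodule.subset_span (Set.mem_range_self i)⟩ with hy
  set g : Fin (Module.finrank ℝ V) → Fin n → ℝ :=
    fun t i => inner ℝ ((stdOrthonormalBasis ℝ V) t) (y i) with hg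
  have hinner : ∀ i j, (inner ℝ (x i) (x j) : ℝ) = ∑ t, g t i * g t j := by
    intro i j
    have h1 : (inner ℝ (x i) (x j) : ℝ) = inner ℝ (y i) (y j) := rfl
    rw [h1, ← (stdOrthonormalBasis ℝ V).sum_inner_mul_inner (y i) (y j)]
    refine Finset.sum_congr rfl fun t _ => ?_
    simp only [hg]
    rw [real_inner_comm (y i)]
  set a : Fin n → ℝ := fun i => Λ i * Real.exp (-(lam ^ 2) * ‖x i‖ ^ 2) with ha
  have key : ∀ i j, Λ i * Λ j * Real.exp (-(lam ^ 2) * ‖x i - x j‖ ^ 2)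
      = a i * a j * Real.exp ((2 * lam ^ 2) * ∑ t, g t i * g t j) := by
    intro i j
    have hn : ‖x i - x j‖ ^ 2 = ‖x i‖ ^ 2 - 2 * inner ℝ (x i) (x j) + ‖x j‖ ^ 2 :=
      norm_sub_sq_real (x i) (x j)
    rw [ha]
    simp only []
    rw [← hinner, hn]
    rw [show -(lam ^ 2) * (‖x i‖ ^ 2 - 2 * inner ℝ (x i) (x j) + ‖x j‖ ^ 2)
        = (-(lam ^ 2) * ‖x i‖ ^ 2) + ((-(lam ^ 2) * ‖x j‖ ^ 2)
          + (2 * lam ^ 2) * inner ℝ (x i) (x j)) by ring]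
    rw [Real.exp_add, Real.exp_add]
    ring
  simp_rw [key]
  exact gram_exp_nonneg g a (2 * lam ^ 2) (by positivity)
end

section
/- Points x₁, …, x_l ∈ ℝ^m are affinely dependent (not in general position) if and only if there exists a nonzero vector Λ = (λ₁, …, λ_l) ∈ ℝⁿ with Σᵢ λᵢ = 0 and Λ D Λᵀ = 0, where D is the l × l matrix with D_{ij} = ‖xᵢ - xⱼ‖². -/
open Finset

lemma quad_key {m l : ℕ} (x : Fin l → EuclideanSpace ℝ (Fin m)) (lam : Fin l → ℝ)
    (hs : ∑ i, lam i = 0) :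
    ∑ i, ∑ j, lam i * lam j * ‖x i - x j‖ ^ 2 = -2 * ‖∑ i, lam i • x i‖ ^ 2 := by
  have hexp : ∀ i j : Fin l, lam i * lam j * ‖x i - x j‖ ^ 2 =
      lam i * lam j * ‖x i‖ ^ 2 + lam i * lam j * ‖x j‖ ^ 2
        - 2 * (lam i * lam j * inner ℝ (x i) (x j)) := by
    intro i j
    rw [norm_sub_sq_real]
    ring
  have hnorm : ‖∑ i, lam i • x i‖ ^ 2 =
      ∑ i, ∑ j, lam i * lam j * inner ℝ (x i) (x j) := by
    rw [← real_inner_self_eq_norm_sq, sum_inner]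
    refine Finset.sum_congr rfl fun i _ => ?_
    rw [inner_sum]
    refine Finset.sum_congr rfl fun j _ => ?_
    rw [real_inner_smul_left, real_inner_smul_right]
    ring
  have h1 : ∑ i, ∑ j, lam i * lam j * ‖x i‖ ^ 2 = 0 := by
    refine Finset.sum_eq_zero fun i _ => ?_
    have : ∑ j, lam i * lam j * ‖x i‖ ^ 2 = (lam i * ‖x i‖ ^ 2) * ∑ j, lam j := by
      rw [Finset.mul_sum]; exact Finset.sum_congr rfl fun j _ => by ring
    rw [this, hs, mul_zero]
  have h2 : ∑ i, ∑ j, lam i * lam j * ‖x j‖ ^ 2 = 0 := by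
    have key : ∀ i, ∑ j, lam i * lam j * ‖x j‖ ^ 2 = lam i * ∑ j, lam j * ‖x j‖ ^ 2 :=
      fun i => by rw [Finset.mul_sum]; exact Finset.sum_congr rfl fun j _ => by ring
    simp only [key, ← Finset.sum_mul, hs, zero_mul]
  have h3 : ∑ i, ∑ j, 2 * (lam i * lam j * inner ℝ (x i) (x j)) =
      2 * ∑ i, ∑ j, lam i * lam j * (inner ℝ (x i) (x j) : ℝ) := by
    simp only [Finset.mul_sum]
  simp only [hexp, Finset.sum_sub_distrib, Finset.sum_add_distrib] at *
  rw [h1, h2, h3, hnorm]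
  ring

/-- Points in `ℝ^m` are affinely dependent iff some nonzero vector of coefficients
summing to zero annihilates the quadratic form of the squared distance matrix. -/
theorem not_affineIndependent_iff_exists_quadForm_eq_zero (m l : ℕ)
    (x : Fin l → EuclideanSpace ℝ (Fin m)) :
    ¬ AffineIndependent ℝ x ↔
      ∃ lam : Fin l → ℝ, lam ≠ 0 ∧ ∑ i, lam i = 0 ∧
        ∑ i, ∑ j, lam i * lam j * ‖x i - x j‖ ^ 2 = 0 := by
  constructor
  · intro h
    rw [affineIndependent_iff] at h
    push_neg at h
    obtain ⟨s, w, hw0, hwx, i, hi, hwi⟩ := h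
    refine ⟨fun i => if i ∈ s then w i else 0, ?_, ?_, ?_⟩
    · intro hcontra
      apply hwi
      have := congrFun hcontra i
      simpa [hi] using this
    · rw [Finset.sum_ite_mem, Finset.univ_inter, hw0]
    · have hs : ∑ j, (fun i => if i ∈ s then w i else 0) j = 0 := by
        rw [Finset.sum_ite_mem, Finset.univ_inter, hw0]
      rw [quad_key x _ hs]
      have hz : ∑ j, (if j ∈ s then w j else 0) • x j = 0 := by
        simp only [ite_smul, zero_smul, Finset.sum_ite_mem, Finset.univ_inter]
        exact hwx
      simp [hz]
      exact hwx
  · rintro ⟨lam, hne, hs, hq⟩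
    intro hind
    rw [affineIndependent_iff] at hind
    rw [quad_key x lam hs] at hq
    have hv : ∑ i, lam i • x i = 0 := by
      have : ‖∑ i, lam i • x i‖ ^ 2 = 0 := by linarith
      simpa using this
    have := hind Finset.univ lam hs hv
    apply hne
    funext i
    exact this i (Finset.mem_univ i)
end

section
/- Let x₁, …, xₙ be pairwise distinct points in a real inner product space, let 0 < α < 1, and let λ₁, …, λₙ ∈ ℝ with Σᵢ λᵢ = 0 and (λ₁, …, λₙ) ≠ 0. Then Σ_{i,j} λᵢ λⱼ ‖xᵢ - xⱼ‖^{2α} < 0. That is, the strict inequality of negative type holds for the α-snowflake of the squared distance matrix. -/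
open Finset
open MeasureTheory

-- PSD of Hadamard powers of a Gram matrix, in coordinates
lemma psd_pow_coord {n : ℕ} {ι : Type*} [Fintype ι] (y : Fin n → ι → ℝ) (μ : Fin n → ℝ)
    (k : ℕ) : 0 ≤ ∑ i, ∑ j, μ i * μ j * (∑ s, y i s * y j s) ^ k := by
  have h : ∀ i j : Fin n, μ i * μ j * (∑ s, y i s * y j s) ^ k
      = ∑ p : Fin k → ι, (μ i * ∏ m, y i (p m)) * (μ j * ∏ m, y j (p m)) := by
    intro i j
    rw [Fintype.sum_pow]
    rw [Finset.mul_sum]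
    congr 1; funext p
    rw [Finset.prod_mul_distrib]; ring
  calc (0:ℝ) ≤ ∑ p : Fin k → ι, (∑ i, μ i * ∏ m, y i (p m)) ^ 2 := by positivity
    _ = ∑ i, ∑ j, μ i * μ j * (∑ s, y i s * y j s) ^ k := by
        simp_rw [h, sq, Finset.sum_mul_sum]
        rw [Finset.sum_comm]
        congr 1; funext i
        rw [Finset.sum_comm]

lemma psd_pow_inner {E : Type*} [NormedAddCommGroup E] [InnerProductSpace ℝ E]
    {n : ℕ} (x : Fin n → E) (μ : Fin n → ℝ) (k : ℕ) :
    0 ≤ ∑ i, ∑ j, μ i * μ j * (inner ℝ (x i) (x j) : ℝ) ^ k := by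
  set F := Submodule.span ℝ (Set.range x) with hF
  have : FiniteDimensional ℝ F := FiniteDimensional.span_of_finite ℝ (Set.finite_range x)
  set d := Module.finrank ℝ F
  set b := stdOrthonormalBasis ℝ F
  have hmem : ∀ i, x i ∈ F := fun i => Submodule.subset_span ⟨i, rfl⟩
  set y : Fin n → EuclideanSpace ℝ (Fin d) := fun i => b.repr ⟨x i, hmem i⟩ with hy
  have hinner : ∀ i j, (inner ℝ (x i) (x j) : ℝ) = ∑ s, y i s * y j s := by
    intro i j
    have h1 : (inner ℝ (x i) (x j) : ℝ) = inner ℝ (⟨x i, hmem i⟩ : F) (⟨x j, hmem j⟩ : F) := rfl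
    have h2 : (inner ℝ (⟨x i, hmem i⟩ : F) (⟨x j, hmem j⟩ : F) : ℝ) = inner ℝ (y i) (y j) :=
      (b.repr.inner_map_map _ _).symm
    rw [h1, h2]
    simp [PiLp.inner_apply, RCLike.inner_apply, mul_comm]
  simp_rw [hinner]
  exact psd_pow_coord (fun i s => y i s) μ k

lemma real_exp_tsum (z : ℝ) : Real.exp z = ∑' k : ℕ, z ^ k / Nat.factorial k := by
  rw [Real.exp_eq_exp_ℝ, NormedSpace.exp_eq_tsum_div]

lemma psd_exp_inner {E : Type*} [NormedAddCommGroup E] [InnerProductSpace ℝ E]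
    {n : ℕ} (x : Fin n → E) (μ : Fin n → ℝ) (c : ℝ) (hc : 0 ≤ c) :
    0 ≤ ∑ i, ∑ j, μ i * μ j * Real.exp (c * (inner ℝ (x i) (x j) : ℝ)) := by
  set g : Fin n → Fin n → ℕ → ℝ :=
    fun i j k => μ i * μ j * ((c * (inner ℝ (x i) (x j) : ℝ)) ^ k / (Nat.factorial k : ℝ)) with hg
  have hsumm : ∀ i j, Summable (g i j) := by
    intro i j
    exact (Real.summable_pow_div_factorial _).mul_left _
  have h1 : ∀ i j : Fin n, μ i * μ j * Real.exp (c * (inner ℝ (x i) (x j) : ℝ))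
      = ∑' k : ℕ, g i j k := by
    intro i j
    rw [real_exp_tsum, ← tsum_mul_left]
  have key : ∑ i, ∑ j, μ i * μ j * Real.exp (c * (inner ℝ (x i) (x j) : ℝ))
      = ∑' k : ℕ, ∑ i, ∑ j, g i j k := by
    calc ∑ i, ∑ j, μ i * μ j * Real.exp (c * (inner ℝ (x i) (x j) : ℝ))
        = ∑ i, ∑ j, ∑' k : ℕ, g i j k := by simp_rw [h1]
      _ = ∑ i, ∑' k : ℕ, ∑ j, g i j k :=
          Finset.sum_congr rfl fun i _ => (Summable.tsum_finsetSum fun j _ => hsumm i j).symm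
      _ = ∑' k : ℕ, ∑ i, ∑ j, g i j k :=
          (Summable.tsum_finsetSum fun i _ => summable_sum fun j _ => hsumm i j).symm
  rw [key]
  apply tsum_nonneg
  intro k
  have h2 : ∑ i, ∑ j, g i j k
      = (c ^ k / (Nat.factorial k : ℝ)) * ∑ i, ∑ j, μ i * μ j * (inner ℝ (x i) (x j) : ℝ) ^ k := by
    rw [Finset.mul_sum]; refine Finset.sum_congr rfl fun i _ => ?_
    rw [Finset.mul_sum]; refine Finset.sum_congr rfl fun j _ => ?_
    rw [hg]; simp only [mul_pow]; ring
  rw [h2]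
  have := psd_pow_inner x μ k
  positivity

lemma psd_gauss {E : Type*} [NormedAddCommGroup E] [InnerProductSpace ℝ E]
    {n : ℕ} (x : Fin n → E) (lam : Fin n → ℝ) (t : ℝ) (ht : 0 ≤ t) :
    0 ≤ ∑ i, ∑ j, lam i * lam j * Real.exp (-(t * ‖x i - x j‖ ^ 2)) := by
  set μ : Fin n → ℝ := fun i => lam i * Real.exp (-(t * ‖x i‖ ^ 2)) with hμ
  have h : ∀ i j : Fin n, lam i * lam j * Real.exp (-(t * ‖x i - x j‖ ^ 2))
      = μ i * μ j * Real.exp ((2 * t) * (inner ℝ (x i) (x j) : ℝ)) := by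
    intro i j
    rw [hμ]
    simp only
    rw [@norm_sub_sq_real]
    rw [show -(t * (‖x i‖ ^ 2 - 2 * inner ℝ (x i) (x j) + ‖x j‖ ^ 2))
      = (-(t * ‖x i‖ ^ 2)) + (-(t * ‖x j‖ ^ 2)) + (2 * t) * (inner ℝ (x i) (x j) : ℝ) by ring]
    rw [Real.exp_add, Real.exp_add]
    ring
  simp_rw [h]
  exact psd_exp_inner x μ (2 * t) (by linarith)

lemma integrable_snow {α r : ℝ} (hα₀ : 0 < α) (hα₁ : α < 1) (hr : 0 ≤ r) :
    IntegrableOn (fun t => (1 - Real.exp (-(t * r))) * t ^ (-α - 1)) (Set.Ioi (0:ℝ)) := by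
  have hcont : ContinuousOn (fun t : ℝ => (1 - Real.exp (-(t * r))) * t ^ (-α - 1))
      (Set.Ioi (0:ℝ)) := by
    apply ContinuousOn.mul
    · fun_prop
    · intro t ht
      exact (Real.continuousAt_rpow_const t _ (Or.inl (ne_of_gt ht))).continuousWithinAt
  have hmeas : AEStronglyMeasurable (fun t : ℝ => (1 - Real.exp (-(t * r))) * t ^ (-α - 1))
      (volume.restrict (Set.Ioi (0:ℝ))) :=
    hcont.aestronglyMeasurable measurableSet_Ioi
  have hbound : ∀ t ∈ Set.Ioi (0:ℝ), 0 ≤ (1 - Real.exp (-(t * r))) * t ^ (-α - 1) ∧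
      (1 - Real.exp (-(t * r))) * t ^ (-α - 1) ≤ min (r * t ^ (-α)) (t ^ (-α - 1)) := by
    intro t ht
    have ht0 : (0:ℝ) < t := ht
    have hw : (0:ℝ) < t ^ (-α - 1) := Real.rpow_pos_of_pos ht0 _
    have he1 : Real.exp (-(t * r)) ≤ 1 := Real.exp_le_one_iff.mpr (by nlinarith)
    have he0 : 1 - Real.exp (-(t * r)) ≤ t * r := by
      have := Real.add_one_le_exp (-(t * r)); linarith
    constructor
    · have : 0 ≤ 1 - Real.exp (-(t * r)) := by linarith
      positivity
    · refine le_min ?_ ?_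
      · calc (1 - Real.exp (-(t * r))) * t ^ (-α - 1) ≤ (t * r) * t ^ (-α - 1) := by
              apply mul_le_mul_of_nonneg_right he0 hw.le
          _ = r * (t * t ^ (-α - 1)) := by ring
          _ = r * t ^ (-α) := by
              rw [show t * t ^ (-α - 1) = t ^ (1:ℝ) * t ^ (-α-1) by rw [Real.rpow_one],
                ← Real.rpow_add ht0]
              norm_num
      · exact mul_le_of_le_one_left hw.le (by linarith [Real.exp_pos (-(t*r))])
  have hint : IntegrableOn (fun t : ℝ => min (r * t ^ (-α)) (t ^ (-α - 1))) (Set.Ioi (0:ℝ)) := by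
    have hmin_meas : AEStronglyMeasurable (fun t : ℝ => min (r * t ^ (-α)) (t ^ (-α - 1)))
        (volume.restrict (Set.Ioi (0:ℝ))) := by
      have c1 : ContinuousOn (fun t : ℝ => r * t ^ (-α)) (Set.Ioi (0:ℝ)) := by
        apply ContinuousOn.mul continuousOn_const
        intro t ht
        exact (Real.continuousAt_rpow_const t _ (Or.inl (ne_of_gt ht))).continuousWithinAt
      have c2 : ContinuousOn (fun t : ℝ => t ^ (-α - 1)) (Set.Ioi (0:ℝ)) := by
        intro t ht
        exact (Real.continuousAt_rpow_const t _ (Or.inl (ne_of_gt ht))).continuousWithinAt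
      exact ContinuousOn.aestronglyMeasurable (fun t ht => ((c1 t ht).min (c2 t ht))) measurableSet_Ioi
    rw [show Set.Ioi (0:ℝ) = Set.Ioc 0 1 ∪ Set.Ioi 1 by
      rw [Set.Ioc_union_Ioi_eq_Ioi]; norm_num] at hmin_meas ⊢
    apply IntegrableOn.union
    · apply Integrable.mono' (g := fun t : ℝ => r * t ^ (-α))
      · apply Integrable.const_mul
        have := intervalIntegral.intervalIntegrable_rpow' (a := 0) (b := 1) (r := -α)
          (by linarith)
        rw [intervalIntegrable_iff] at this
        exact (by simpa [Set.uIoc_of_le (zero_le_one' ℝ)] using this :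
          IntegrableOn (fun x : ℝ => x ^ (-α)) (Set.Ioc 0 1))
      · exact hmin_meas.mono_measure (Measure.restrict_mono Set.subset_union_left le_rfl)
      · apply ae_restrict_of_forall_mem measurableSet_Ioc
        intro t ht
        have ht0 : (0:ℝ) < t := ht.1
        have h1 : (0:ℝ) ≤ r * t ^ (-α) := by positivity
        have h2 : (0:ℝ) ≤ t ^ (-α - 1) := (Real.rpow_pos_of_pos ht0 _).le
        rw [Real.norm_eq_abs, abs_of_nonneg (le_min h1 h2)]
        exact min_le_left _ _
    · apply Integrable.mono' (g := fun t : ℝ => t ^ (-α - 1))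
      · exact integrableOn_Ioi_rpow_of_lt (by linarith) one_pos
      · exact hmin_meas.mono_measure (Measure.restrict_mono Set.subset_union_right le_rfl)
      · apply ae_restrict_of_forall_mem measurableSet_Ioi
        intro t ht
        have ht0 : (0:ℝ) < t := lt_trans one_pos ht
        have h1 : (0:ℝ) ≤ r * t ^ (-α) := by positivity
        have h2 : (0:ℝ) ≤ t ^ (-α - 1) := (Real.rpow_pos_of_pos ht0 _).le
        rw [Real.norm_eq_abs, abs_of_nonneg (le_min h1 h2)]
        exact min_le_right _ _
  apply Integrable.mono' hint hmeas
  apply ae_restrict_of_forall_mem measurableSet_Ioi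
  intro t ht
  have h := hbound t ht
  rw [Real.norm_eq_abs, abs_of_nonneg h.1]
  exact h.2

lemma snow_repr {α : ℝ} (hα₀ : 0 < α) {r : ℝ} (hr : 0 ≤ r) :
    ∫ t in Set.Ioi (0:ℝ), (1 - Real.exp (-(t * r))) * t ^ (-α - 1)
      = r ^ α * ∫ t in Set.Ioi (0:ℝ), (1 - Real.exp (-t)) * t ^ (-α - 1) := by
  rcases eq_or_lt_of_le hr with h0 | hr
  · simp [← h0, Real.zero_rpow hα₀.ne']
  · have key := integral_comp_mul_left_Ioi
      (fun u => (1 - Real.exp (-u)) * u ^ (-α - 1)) 0 hr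
    simp only [mul_zero] at key
    have congr1 : ∫ t in Set.Ioi (0:ℝ), (1 - Real.exp (-(r * t))) * (r * t) ^ (-α - 1)
        = ∫ t in Set.Ioi (0:ℝ), r ^ (-α - 1) * ((1 - Real.exp (-(t * r))) * t ^ (-α - 1)) := by
      apply setIntegral_congr_fun measurableSet_Ioi
      intro t ht
      have ht0 : (0:ℝ) < t := ht
      simp only
      rw [Real.mul_rpow hr.le ht0.le, mul_comm t r]
      ring
    rw [congr1, integral_const_mul, smul_eq_mul] at key
    have hrpow : (0:ℝ) < r ^ (-α - 1) := Real.rpow_pos_of_pos hr _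
    have hsolve : ∫ t in Set.Ioi (0:ℝ), (1 - Real.exp (-(t * r))) * t ^ (-α - 1)
        = (r ^ (-α - 1))⁻¹ * (r⁻¹ * ∫ u in Set.Ioi (0:ℝ), (1 - Real.exp (-u)) * u ^ (-α - 1)) := by
      rw [← key]; field_simp; simp_rw [mul_comm r]
    rw [hsolve, ← Real.rpow_neg hr.le, neg_sub, sub_neg_eq_add, ← mul_assoc]
    congr 1
    rw [show (1:ℝ) + α = α + 1 by ring, Real.rpow_add hr, Real.rpow_one]
    field_simp

lemma I_pos {α : ℝ} (hα₀ : 0 < α) (hα₁ : α < 1) :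
    0 < ∫ t in Set.Ioi (0:ℝ), (1 - Real.exp (-t)) * t ^ (-α - 1) := by
  have hint : IntegrableOn (fun t : ℝ => (1 - Real.exp (-t)) * t ^ (-α - 1)) (Set.Ioi 0) := by
    have := integrable_snow hα₀ hα₁ (le_refl 0 |>.trans zero_le_one) (r := 1)
    simpa using this
  have hnonneg : 0 ≤ᵐ[volume.restrict (Set.Ioi (0:ℝ))]
      fun t : ℝ => (1 - Real.exp (-t)) * t ^ (-α - 1) := by
    apply ae_restrict_of_forall_mem measurableSet_Ioi
    intro t ht
    have ht0 : (0:ℝ) < t := ht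
    have h1 : Real.exp (-t) ≤ 1 := Real.exp_le_one_iff.mpr (by linarith)
    have h2 : (0:ℝ) ≤ t ^ (-α - 1) := (Real.rpow_pos_of_pos ht0 _).le
    have : (0:ℝ) ≤ 1 - Real.exp (-t) := by linarith
    positivity
  set c : ℝ := (1 - Real.exp (-1)) * 2 ^ (-α - 1) with hc
  have hcpos : 0 < c := by
    have h1 : Real.exp (-1) < 1 := Real.exp_lt_one_iff.mpr (by norm_num)
    have h2 : (0:ℝ) < (2:ℝ) ^ (-α - 1) := Real.rpow_pos_of_pos two_pos _
    rw [hc]; nlinarith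
  have hlow : ∀ t ∈ Set.Ioc (1:ℝ) 2, c ≤ (1 - Real.exp (-t)) * t ^ (-α - 1) := by
    intro t ht
    have ht0 : (0:ℝ) < t := lt_trans one_pos ht.1
    have h1 : Real.exp (-t) ≤ Real.exp (-1) := Real.exp_le_exp.mpr (by linarith [ht.1.le])
    have h2 : (2:ℝ) ^ (-α - 1) ≤ t ^ (-α - 1) :=
      Real.rpow_le_rpow_of_nonpos ht0 ht.2 (by linarith)
    have h3 : Real.exp (-1) < 1 := Real.exp_lt_one_iff.mpr (by norm_num)
    have h4 : (0:ℝ) < (2:ℝ) ^ (-α - 1) := Real.rpow_pos_of_pos two_pos _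
    rw [hc]
    apply mul_le_mul (by linarith) h2 h4.le (by linarith)
  have step1 : c * (volume (Set.Ioc (1:ℝ) 2)).toReal
      ≤ ∫ t in Set.Ioc (1:ℝ) 2, (1 - Real.exp (-t)) * t ^ (-α - 1) :=
    setIntegral_ge_of_const_le_real measurableSet_Ioc (by simp) hlow
      (hint.mono_set (fun t ht => lt_trans one_pos ht.1))
  have hvol : (volume (Set.Ioc (1:ℝ) 2)).toReal = 1 := by
    rw [Real.volume_Ioc]; norm_num
  have step2 : ∫ t in Set.Ioc (1:ℝ) 2, (1 - Real.exp (-t)) * t ^ (-α - 1)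
      ≤ ∫ t in Set.Ioi (0:ℝ), (1 - Real.exp (-t)) * t ^ (-α - 1) :=
    setIntegral_mono_set hint hnonneg
      (HasSubset.Subset.eventuallyLE (fun t ht => lt_trans one_pos ht.1))
  rw [hvol] at step1
  linarith


/-- Strict negative type for snowflakes of Euclidean metrics: for distinct points in a
real inner product space, `0 < α < 1`, and nonzero coefficients summing to zero,
the quadratic form of the `2α`-powered distance matrix is strictly negative. -/
theorem snowflake_strict_negType {E : Type*} [NormedAddCommGroup E] [InnerProductSpace ℝ E]
    (n : ℕ) (x : Fin n → E) (hx : Function.Injective x) (α : ℝ) (hα₀ : 0 < α) (hα₁ : α < 1)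
    (lam : Fin n → ℝ) (hsum : ∑ i, lam i = 0) (hlam : lam ≠ 0) :
    ∑ i, ∑ j, lam i * lam j * ‖x i - x j‖ ^ (2 * α) < 0 := by
  set w : ℝ → ℝ := fun t => t ^ (-α - 1) with hw
  set r : Fin n → Fin n → ℝ := fun i j => ‖x i - x j‖ ^ 2 with hr
  have hr_nonneg : ∀ i j, 0 ≤ r i j := fun i j => sq_nonneg _
  set I : ℝ := ∫ t in Set.Ioi (0:ℝ), (1 - Real.exp (-t)) * t ^ (-α - 1) with hI_def
  have hI : 0 < I := I_pos hα₀ hα₁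
  set G : ℝ → ℝ := fun t => ∑ i, ∑ j, lam i * lam j * Real.exp (-(t * r i j)) with hG_def
  set S : ℝ := ∑ i, ∑ j, lam i * lam j * ‖x i - x j‖ ^ (2 * α) with hS_def
  -- rewrite powers
  have hpow : ∀ i j, ‖x i - x j‖ ^ (2 * α) = r i j ^ α := by
    intro i j
    rw [hr]
    rw [show (2:ℝ) * α = ((2:ℕ):ℝ) * α by norm_num, Real.rpow_mul (norm_nonneg _),
      Real.rpow_natCast]
  -- integrability of each summand
  have hf_int : ∀ i j : Fin n,
      IntegrableOn (fun t => lam i * lam j * ((1 - Real.exp (-(t * r i j))) * w t))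
        (Set.Ioi (0:ℝ)) :=
    fun i j => (integrable_snow hα₀ hα₁ (hr_nonneg i j)).const_mul _
  have hsum_int : IntegrableOn
      (fun t => ∑ i, ∑ j, lam i * lam j * ((1 - Real.exp (-(t * r i j))) * w t))
      (Set.Ioi (0:ℝ)) := by
    apply integrable_finset_sum
    intro i _
    exact integrable_finset_sum _ (fun j _ => hf_int i j)
  -- pointwise identity
  have hpt : ∀ t : ℝ, ∑ i, ∑ j, lam i * lam j * ((1 - Real.exp (-(t * r i j))) * w t)
      = -(G t * w t) := by
    intro t
    have expand : ∀ i j : Fin n, lam i * lam j * ((1 - Real.exp (-(t * r i j))) * w t)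
        = (lam i * lam j) * w t - lam i * lam j * Real.exp (-(t * r i j)) * w t := by
      intro i j; ring
    simp_rw [expand, Finset.sum_sub_distrib, ← Finset.sum_mul, ← Finset.mul_sum]
    rw [hsum]
    simp [hG_def, Finset.sum_mul]
  -- the key identity S * I = -∫ G t * w t
  have key : S * I = -∫ t in Set.Ioi (0:ℝ), G t * w t := by
    have e1 : S * I = ∑ i, ∑ j, lam i * lam j *
        ∫ t in Set.Ioi (0:ℝ), (1 - Real.exp (-(t * r i j))) * w t := by
      rw [hS_def, Finset.sum_mul]
      refine Finset.sum_congr rfl fun i _ => ?_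
      rw [Finset.sum_mul]
      refine Finset.sum_congr rfl fun j _ => ?_
      rw [hpow i j, snow_repr hα₀ (hr_nonneg i j), ← hI_def]
      ring
    have e2 : ∑ i, ∑ j, lam i * lam j *
        ∫ t in Set.Ioi (0:ℝ), (1 - Real.exp (-(t * r i j))) * w t
        = ∫ t in Set.Ioi (0:ℝ), ∑ i, ∑ j,
            lam i * lam j * ((1 - Real.exp (-(t * r i j))) * w t) := by
      rw [integral_finset_sum _ (fun i _ => integrable_finset_sum _ (fun j _ => hf_int i j))]
      refine Finset.sum_congr rfl fun i _ => ?_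
      rw [integral_finset_sum _ (fun j _ => hf_int i j)]
      refine Finset.sum_congr rfl fun j _ => ?_
      rw [integral_const_mul]
    have e3 : ∫ t in Set.Ioi (0:ℝ), ∑ i, ∑ j,
        lam i * lam j * ((1 - Real.exp (-(t * r i j))) * w t)
        = ∫ t in Set.Ioi (0:ℝ), -(G t * w t) := by
      refine setIntegral_congr_fun measurableSet_Ioi fun t _ => hpt t
    rw [e1, e2, e3, integral_neg]
  -- positivity of the Gaussian integral
  have hG_nonneg : ∀ t : ℝ, 0 ≤ t → 0 ≤ G t := by
    intro t ht
    simpa [hG_def, hr] using psd_gauss x lam t ht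
  have hS2 : 0 < ∑ i, lam i ^ 2 := by
    obtain ⟨i, hi⟩ := Function.ne_iff.mp hlam
    exact Finset.sum_pos' (fun j _ => sq_nonneg _) ⟨i, Finset.mem_univ i, sq_pos_of_ne_zero hi⟩
  have hd : ∀ i j : Fin n, i ≠ j → 0 < r i j := by
    intro i j hij
    have h1 : x i ≠ x j := fun h => hij (hx h)
    have h2 : x i - x j ≠ 0 := sub_ne_zero.mpr h1
    have h3 : 0 < ‖x i - x j‖ := norm_pos_iff.mpr h2
    rw [hr]; positivity
  have hGlim : Filter.Tendsto G Filter.atTop (nhds (∑ i, lam i ^ 2)) := by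
    have hLsum : ∑ i, lam i ^ 2 = ∑ i, ∑ j, (if i = j then lam i * lam j else (0:ℝ)) := by
      refine Finset.sum_congr rfl fun i _ => ?_
      rw [Finset.sum_ite_eq (Finset.univ) i (fun j => lam i * lam j)]
      simp [sq]
    rw [hLsum, hG_def]
    apply tendsto_finset_sum
    intro i _
    apply tendsto_finset_sum
    intro j _
    by_cases hij : i = j
    · subst hij
      have : (fun t : ℝ => lam i * lam i * Real.exp (-(t * r i i))) =
          fun _ : ℝ => lam i * lam i := by
        funext t; rw [hr]; simp
      simp only [this, if_pos rfl]
      exact tendsto_const_nhds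
    · have hd' := hd i j hij
      have h1 : Filter.Tendsto (fun t : ℝ => t * r i j) Filter.atTop Filter.atTop :=
        Filter.Tendsto.atTop_mul_const hd' Filter.tendsto_id
      have h2 : Filter.Tendsto (fun t : ℝ => -(t * r i j)) Filter.atTop Filter.atBot :=
        Filter.tendsto_neg_atTop_atBot.comp h1
      have h3 : Filter.Tendsto (fun t : ℝ => Real.exp (-(t * r i j))) Filter.atTop (nhds 0) :=
        Real.tendsto_exp_atBot.comp h2
      have h4 := h3.const_mul (lam i * lam j)
      simpa [hij] using h4
  obtain ⟨T, hT⟩ := Filter.eventually_atTop.mp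
    ((hGlim.eventually (eventually_gt_nhds (half_lt_self hS2))).and
      (Filter.eventually_ge_atTop 1))
  have hT1 : (1:ℝ) ≤ T := (hT T le_rfl).2
  set c : ℝ := (∑ i, lam i ^ 2) / 2 * (T + 1) ^ (-α - 1) with hc
  have hTpow : (0:ℝ) < (T + 1) ^ (-α - 1) := Real.rpow_pos_of_pos (by linarith) _
  have hcpos : 0 < c := by rw [hc]; positivity
  have hH_int : IntegrableOn (fun t => G t * w t) (Set.Ioi (0:ℝ)) := by
    have heq : (fun t => G t * w t) = fun t =>
        -(∑ i, ∑ j, lam i * lam j * ((1 - Real.exp (-(t * r i j))) * w t)) := by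
      funext t; rw [hpt t]; ring
    rw [heq]
    exact hsum_int.neg
  have hH_nonneg : 0 ≤ᵐ[volume.restrict (Set.Ioi (0:ℝ))] fun t => G t * w t := by
    apply ae_restrict_of_forall_mem measurableSet_Ioi
    intro t ht
    have ht0 : (0:ℝ) < t := ht
    have h1 : 0 ≤ G t := hG_nonneg t ht0.le
    have h2 : 0 ≤ w t := (Real.rpow_pos_of_pos ht0 _).le
    exact mul_nonneg h1 h2
  have hsubset : Set.Ioc T (T + 1) ⊆ Set.Ioi (0:ℝ) := by
    intro t ht
    have : T < t := ht.1
    simp only [Set.mem_Ioi]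
    linarith
  have hHle : ∀ t ∈ Set.Ioc T (T + 1), c ≤ G t * w t := by
    intro t ht
    have htT : T ≤ t := ht.1.le
    have ht0 : (0:ℝ) < t := lt_of_lt_of_le (by linarith : (0:ℝ) < T) htT
    have hGt := (hT t htT).1
    have hw_ge : (T + 1) ^ (-α - 1) ≤ w t :=
      Real.rpow_le_rpow_of_nonpos ht0 ht.2 (by linarith)
    rw [hc]
    exact mul_le_mul hGt.le hw_ge hTpow.le (hG_nonneg t ht0.le)
  have hstep1 : c * (volume (Set.Ioc T (T + 1))).toReal
      ≤ ∫ t in Set.Ioc T (T + 1), G t * w t :=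
    setIntegral_ge_of_const_le_real measurableSet_Ioc (by simp) hHle (hH_int.mono_set hsubset)
  have hvol : (volume (Set.Ioc T (T + 1))).toReal = 1 := by
    rw [Real.volume_Ioc, show T + 1 - T = 1 by ring]
    norm_num
  have hstep2 : ∫ t in Set.Ioc T (T + 1), G t * w t ≤ ∫ t in Set.Ioi (0:ℝ), G t * w t :=
    setIntegral_mono_set hH_int hH_nonneg (HasSubset.Subset.eventuallyLE hsubset)
  rw [hvol, mul_one] at hstep1
  have hJ : 0 < ∫ t in Set.Ioi (0:ℝ), G t * w t := lt_of_lt_of_le hcpos (hstep1.trans hstep2)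
  nlinarith [key, hI, hJ]
end

section
/- Let X = {x₁, …, xₙ} be an n-point subset of a real Hilbert space and let 0 < α < 1. Then the snowflake metric space X^α (same points, with distance d_α(x,y) = ‖x - y‖^α) cannot be isometrically embedded into Euclidean space ℝ^{n-2}. Equivalently, the images of the n points under any isometric embedding of X^α into a Euclidean space are affinely independent. -/
open Finset MeasureTheory Set Real Filter Topology Matrix


noncomputable def snowPhi (α : ℝ) : ℝ → ℝ := fun u => (1 - Real.exp (-u)) * u ^ (-1 - α)

lemma snowPhi_contOn (α : ℝ) : ContinuousOn (snowPhi α) (Ioi 0) := by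
  apply ContinuousOn.mul
  · exact (continuous_const.sub (Real.continuous_exp.comp continuous_neg)).continuousOn
  · exact ContinuousOn.rpow_const continuousOn_id (fun x hx => Or.inl (ne_of_gt hx))

lemma snowPhi_nonneg (α : ℝ) {u : ℝ} (hu : 0 ≤ u) : 0 ≤ snowPhi α u := by
  unfold snowPhi
  apply mul_nonneg
  · simp only [sub_nonneg]
    exact Real.exp_le_one_iff.mpr (by linarith)
  · exact Real.rpow_nonneg hu _

lemma snowPhi_integrable {α : ℝ} (hα₀ : 0 < α) (hα₁ : α < 1) :
    IntegrableOn (snowPhi α) (Ioi 0) := by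
  have h01 : IntegrableOn (snowPhi α) (Ioo 0 1) := by
    have hg : IntegrableOn (fun u : ℝ => u ^ (-α)) (Ioo (0:ℝ) 1) :=
      (intervalIntegral.integrableOn_Ioo_rpow_iff one_pos).mpr (by linarith)
    refine Integrable.mono' hg ?_ ?_
    · exact ((snowPhi_contOn α).mono (Ioo_subset_Ioi_self)).aestronglyMeasurable measurableSet_Ioo
    · filter_upwards [ae_restrict_mem measurableSet_Ioo] with u hu
      obtain ⟨hu0, hu1⟩ := hu
      have hle : 1 - Real.exp (-u) ≤ u := by
        have := Real.add_one_le_exp (-u)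
        linarith
      have hrp : (0:ℝ) ≤ u ^ (-1 - α) := Real.rpow_nonneg hu0.le _
      rw [Real.norm_eq_abs, abs_of_nonneg (snowPhi_nonneg α hu0.le)]
      unfold snowPhi
      calc (1 - Real.exp (-u)) * u ^ (-1 - α) ≤ u * u ^ (-1 - α) :=
            mul_le_mul_of_nonneg_right hle hrp
        _ = u ^ (-α) := by
            nth_rewrite 1 [← Real.rpow_one u]
            rw [← Real.rpow_add hu0]
            ring_nf
  have h1i : IntegrableOn (snowPhi α) (Ici 1) := by
    have hg : IntegrableOn (fun u : ℝ => u ^ (-1 - α)) (Ioi (1:ℝ)) :=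
      integrableOn_Ioi_rpow_of_lt (by linarith) one_pos
    have hg' : IntegrableOn (fun u : ℝ => u ^ (-1 - α)) (Ici (1:ℝ)) := by
      rwa [integrableOn_Ici_iff_integrableOn_Ioi]
    refine Integrable.mono' hg' ?_ ?_
    · exact ((snowPhi_contOn α).mono (fun x (hx : x ∈ Ici (1:ℝ)) => Set.mem_Ioi.mpr (lt_of_lt_of_le one_pos hx))).aestronglyMeasurable
        measurableSet_Ici
    · filter_upwards [ae_restrict_mem measurableSet_Ici] with u hu
      have hu0 : (0:ℝ) < u := lt_of_lt_of_le one_pos hu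
      have hrp : (0:ℝ) ≤ u ^ (-1 - α) := Real.rpow_nonneg hu0.le _
      rw [Real.norm_eq_abs, abs_of_nonneg (snowPhi_nonneg α hu0.le)]
      unfold snowPhi
      nth_rewrite 2 [← one_mul (u ^ (-1 - α))]
      apply mul_le_mul_of_nonneg_right _ hrp
      have : 0 < Real.exp (-u) := Real.exp_pos _
      linarith
  have : Ioi (0:ℝ) ⊆ Ioo 0 1 ∪ Ici 1 := by
    intro y hy
    rcases lt_or_ge y 1 with h | h
    · exact Or.inl ⟨hy, h⟩
    · exact Or.inr h
  exact (h01.union h1i).mono_set this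




lemma snow_eqOn {α r : ℝ} (hr : 0 < r) :
    EqOn (fun s : ℝ => (1 - Real.exp (-(s * r))) * s ^ (-1 - α))
      (fun s : ℝ => r ^ (1 + α) * snowPhi α (r * s)) (Ioi 0) := by
  intro s hs
  have hs0 : (0:ℝ) < s := hs
  simp only [snowPhi]
  rw [Real.mul_rpow hr.le hs0.le, mul_comm s r]
  rw [show r ^ (1 + α) * ((1 - Real.exp (-(r * s))) * (r ^ (-1 - α) * s ^ (-1 - α)))
      = (r ^ (1 + α) * r ^ (-1 - α)) * ((1 - Real.exp (-(r * s))) * s ^ (-1 - α)) by ring]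
  rw [← Real.rpow_add hr]
  norm_num

lemma snow_scaled_integrable {α r : ℝ} (hα₀ : 0 < α) (hα₁ : α < 1) (hr : 0 < r) :
    IntegrableOn (fun s : ℝ => (1 - Real.exp (-(s * r))) * s ^ (-1 - α)) (Ioi 0) := by
  have h1 : IntegrableOn (fun s : ℝ => snowPhi α (r * s)) (Ioi 0) :=
    (integrableOn_Ioi_comp_mul_left_iff (snowPhi α) 0 hr).mpr
      (by simpa using snowPhi_integrable hα₀ hα₁)
  have h2 : IntegrableOn (fun s : ℝ => r ^ (1 + α) * snowPhi α (r * s)) (Ioi 0) :=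
    h1.const_mul _
  exact h2.congr_fun (fun s hs => (snow_eqOn hr hs).symm) measurableSet_Ioi

lemma snow_scaled_integral {α r : ℝ} (hα₀ : 0 < α) (hα₁ : α < 1) (hr : 0 ≤ r) :
    ∫ s in Ioi (0:ℝ), (1 - Real.exp (-(s * r))) * s ^ (-1 - α)
      = r ^ α * ∫ u in Ioi (0:ℝ), snowPhi α u := by
  rcases eq_or_lt_of_le hr with rfl | hr
  · simp [Real.zero_rpow (ne_of_gt hα₀)]
  rw [setIntegral_congr_fun measurableSet_Ioi (snow_eqOn hr)]
  rw [MeasureTheory.integral_const_mul, integral_comp_mul_left_Ioi (snowPhi α) 0 hr,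
    mul_zero, smul_eq_mul, ← mul_assoc, ← Real.rpow_neg_one r, ← Real.rpow_add hr]
  ring_nf


lemma aux_pow_psd {n : ℕ} {ι : Type*} [Fintype ι] (u : Fin n → ι → ℝ) (b : Fin n → ℝ) (k : ℕ) :
    0 ≤ ∑ i, ∑ j, b i * b j * (∑ a, u i a * u j a) ^ k := by
  have key : ∀ i j : Fin n, b i * b j * (∑ a, u i a * u j a) ^ k
      = ∑ t : Fin k → ι, (b i * ∏ m, u i (t m)) * (b j * ∏ m, u j (t m)) := by
    intro i j
    have h1 : (∑ a, u i a * u j a) ^ k = ∏ _m : Fin k, (∑ a, u i a * u j a) := by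
      rw [Finset.prod_const, Finset.card_univ, Fintype.card_fin]
    rw [h1, Finset.prod_univ_sum]
    rw [Finset.mul_sum]
    refine Finset.sum_congr rfl fun t _ => ?_
    rw [Finset.prod_mul_distrib]; ring
  calc ∑ i, ∑ j, b i * b j * (∑ a, u i a * u j a) ^ k
      = ∑ t : Fin k → ι, (∑ i, b i * ∏ m, u i (t m)) * (∑ j, b j * ∏ m, u j (t m)) := by
        simp_rw [key, Finset.sum_mul_sum]
        rw [show (∑ i, ∑ j, ∑ t : Fin k → ι, (b i * ∏ m, u i (t m)) * (b j * ∏ m, u j (t m)))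
            = ∑ i, ∑ t : Fin k → ι, ∑ j, (b i * ∏ m, u i (t m)) * (b j * ∏ m, u j (t m))
          from Finset.sum_congr rfl fun i _ => Finset.sum_comm]
        exact Finset.sum_comm
    _ ≥ 0 := Finset.sum_nonneg fun t _ => mul_self_nonneg _


lemma gram_decomp {H : Type*} [NormedAddCommGroup H] [InnerProductSpace ℝ H]
    {n : ℕ} (x : Fin n → H) :
    ∃ u : Fin n → Fin n → ℝ, ∀ i j, (inner ℝ (x i) (x j) : ℝ) = ∑ a, u i a * u j a := by
  classical
  set G : Matrix (Fin n) (Fin n) ℝ := Matrix.of fun i j => (inner ℝ (x i) (x j) : ℝ) with hG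
  have hpsd : G.PosSemidef := by
    refine Matrix.PosSemidef.of_dotProduct_mulVec_nonneg ?_ ?_
    · ext i j
      simp [G, Matrix.conjTranspose, real_inner_comm]
    · intro v
      have h2 : star v ⬝ᵥ (G *ᵥ v) = (inner ℝ (∑ i, v i • x i) (∑ j, v j • x j) : ℝ) := by
        rw [sum_inner]
        simp only [dotProduct, Matrix.mulVec, star_trivial]
        refine Finset.sum_congr rfl fun i _ => ?_
        rw [inner_sum, Finset.mul_sum]
        refine Finset.sum_congr rfl fun j _ => ?_
        simp only [real_inner_smul_left, real_inner_smul_right, G, Matrix.of_apply]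
        ring
      rw [h2]
      exact real_inner_self_nonneg
  obtain ⟨B, hB⟩ : ∃ B : Matrix (Fin n) (Fin n) ℝ, G = Bᴴ * B := by
    open scoped MatrixOrder in
    obtain ⟨X, hX, -, hXX⟩ := CFC.exists_sqrt_of_isSelfAdjoint_of_quasispectrumRestricts
      hpsd.isHermitian (QuasispectrumRestricts.nnreal_of_nonneg hpsd.nonneg)
    refine ⟨X, ?_⟩; rw [show Xᴴ = X from hX.star_eq]; exact hXX.symm
  refine ⟨fun i a => B a i, fun i j => ?_⟩
  have h3 : G i j = (Bᴴ * B) i j := by rw [← hB]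
  simpa [Matrix.mul_apply, G] using h3



lemma gaussian_psd {H : Type*} [NormedAddCommGroup H] [InnerProductSpace ℝ H]
    {n : ℕ} (x : Fin n → H) (w : Fin n → ℝ) {s : ℝ} (hs : 0 ≤ s) :
    0 ≤ ∑ i, ∑ j, w i * w j * Real.exp (-(s * ‖x i - x j‖ ^ 2)) := by
  obtain ⟨u, hu⟩ := gram_decomp x
  set b : Fin n → ℝ := fun i => w i * Real.exp (-(s * ‖x i‖ ^ 2)) with hb
  -- rewrite each exp term
  have key : ∀ i j, w i * w j * Real.exp (-(s * ‖x i - x j‖ ^ 2))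
      = b i * b j * Real.exp (2 * s * (inner ℝ (x i) (x j) : ℝ)) := by
    intro i j
    have hns : ‖x i - x j‖ ^ 2 = ‖x i‖ ^ 2 - 2 * (inner ℝ (x i) (x j) : ℝ) + ‖x j‖ ^ 2 :=
      norm_sub_sq_real _ _
    rw [hns, hb]
    simp only []
    rw [show -(s * (‖x i‖ ^ 2 - 2 * (inner ℝ (x i) (x j) : ℝ) + ‖x j‖ ^ 2))
        = -(s * ‖x i‖ ^ 2) + -(s * ‖x j‖ ^ 2) + 2 * s * (inner ℝ (x i) (x j) : ℝ) by ring]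
    rw [Real.exp_add, Real.exp_add]
    ring
  simp_rw [key]
  -- expand exp as a series
  have hexp : ∀ i j, Real.exp (2 * s * (inner ℝ (x i) (x j) : ℝ))
      = ∑' k : ℕ, (2 * s) ^ k / (Nat.factorial k : ℝ) * (∑ a, u i a * u j a) ^ k := by
    intro i j
    rw [Real.exp_eq_exp_ℝ, NormedSpace.exp_eq_tsum_div, ← hu i j]
    refine tsum_congr fun k => ?_
    rw [mul_pow]; ring
  -- convert double sum to a sum over pairs
  rw [← Fintype.sum_prod_type (f := fun p : Fin n × Fin n => b p.1 * b p.2 * Real.exp (2 * s * (inner ℝ (x p.1) (x p.2) : ℝ)))]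
  have hsummable : ∀ p : Fin n × Fin n, Summable (fun k : ℕ =>
      b p.1 * b p.2 * ((2 * s) ^ k / (Nat.factorial k : ℝ) * (∑ a, u p.1 a * u p.2 a) ^ k)) := by
    intro p
    apply Summable.mul_left
    have : Summable (fun k : ℕ => ((2 * s) * (∑ a, u p.1 a * u p.2 a)) ^ k / (Nat.factorial k : ℝ)) :=
      Real.summable_pow_div_factorial _
    refine this.congr fun k => ?_
    rw [mul_pow]; ring
  calc (0:ℝ) ≤ ∑' k : ℕ, ∑ p : Fin n × Fin n,
        b p.1 * b p.2 * ((2 * s) ^ k / (Nat.factorial k : ℝ) * (∑ a, u p.1 a * u p.2 a) ^ k) := by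
        refine tsum_nonneg fun k => ?_
        have h1 : ∑ p : Fin n × Fin n, b p.1 * b p.2 * ((2 * s) ^ k / (Nat.factorial k : ℝ) * (∑ a, u p.1 a * u p.2 a) ^ k)
            = (2 * s) ^ k / (Nat.factorial k : ℝ) * ∑ i, ∑ j, b i * b j * (∑ a, u i a * u j a) ^ k := by
          rw [Fintype.sum_prod_type, Finset.mul_sum]
          refine Finset.sum_congr rfl fun i _ => ?_
          rw [Finset.mul_sum]
          exact Finset.sum_congr rfl fun j _ => by ring
        rw [h1]
        exact mul_nonneg (div_nonneg (pow_nonneg (by linarith) _) (Nat.cast_nonneg _))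
          (aux_pow_psd u b k)
    _ = ∑ p : Fin n × Fin n, b p.1 * b p.2 * Real.exp (2 * s * (inner ℝ (x p.1) (x p.2) : ℝ)) := by
        rw [Summable.tsum_finsetSum (fun p _ => hsummable p)]
        refine Finset.sum_congr rfl fun p _ => ?_
        rw [hexp p.1 p.2, tsum_mul_left]




lemma snow_scaled_integrable' {α r : ℝ} (hα₀ : 0 < α) (hα₁ : α < 1) (hr : 0 ≤ r) :
    IntegrableOn (fun s : ℝ => (1 - Real.exp (-(s * r))) * s ^ (-1 - α)) (Ioi 0) := by
  rcases eq_or_lt_of_le hr with rfl | hr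
  · have : (fun s : ℝ => (1 - Real.exp (-(s * 0))) * s ^ (-1 - α)) = fun _ => (0:ℝ) := by
      funext s; simp
    rw [this]
    exact integrableOn_zero
  · exact snow_scaled_integrable hα₀ hα₁ hr

lemma snow_neg {H : Type*} [NormedAddCommGroup H] [InnerProductSpace ℝ H]
    {n : ℕ} (x : Fin n → H) (hx : Function.Injective x) {α : ℝ} (hα₀ : 0 < α) (hα₁ : α < 1)
    (w : Fin n → ℝ) (hw0 : ∑ i, w i = 0) {i0 : Fin n} (hi0 : w i0 ≠ 0) :
    (∑ i, ∑ j, w i * w j * ((‖x i - x j‖ ^ 2) ^ α)) * (∫ u in Ioi (0:ℝ), snowPhi α u) < 0 := by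
  classical
  set K := ∫ u in Ioi (0:ℝ), snowPhi α u with hK
  set r : Fin n × Fin n → ℝ := fun p => ‖x p.1 - x p.2‖ ^ 2 with hr
  have hrnn : ∀ p, 0 ≤ r p := fun p => sq_nonneg _
  -- the integrand functions
  set g : Fin n × Fin n → ℝ → ℝ :=
    fun p s => w p.1 * w p.2 * ((1 - Real.exp (-(s * r p))) * s ^ (-1 - α)) with hg
  have hgint : ∀ p, IntegrableOn (g p) (Ioi 0) := fun p =>
    (snow_scaled_integrable' hα₀ hα₁ (hrnn p)).const_mul _
  -- Step 1 : LHS = ∫ ∑ p, g p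
  have step1 : (∑ i, ∑ j, w i * w j * ((‖x i - x j‖ ^ 2) ^ α)) * K
      = ∫ s in Ioi (0:ℝ), ∑ p : Fin n × Fin n, g p s := by
    rw [integral_finset_sum _ (fun p _ => hgint p)]
    rw [← Fintype.sum_prod_type (f := fun p : Fin n × Fin n =>
      w p.1 * w p.2 * ((‖x p.1 - x p.2‖ ^ 2) ^ α)), Finset.sum_mul]
    refine Finset.sum_congr rfl fun p _ => ?_
    rw [hg]
    simp only []
    rw [MeasureTheory.integral_const_mul, snow_scaled_integral hα₀ hα₁ (hrnn p)]
    ring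
  -- Step 2 : pointwise identity on Ioi 0
  set G : ℝ → ℝ := fun s => ∑ i, ∑ j, w i * w j * Real.exp (-(s * ‖x i - x j‖ ^ 2)) with hGdef
  have step2 : ∀ s : ℝ, ∑ p : Fin n × Fin n, g p s = -(G s * s ^ (-1 - α)) := by
    intro s
    have hzero : ∑ i, ∑ j, w i * w j = 0 := by
      rw [← Finset.sum_mul_sum, hw0, mul_zero]
    rw [hGdef]
    simp only []
    rw [← Fintype.sum_prod_type (f := fun p : Fin n × Fin n =>
      w p.1 * w p.2 * Real.exp (-(s * ‖x p.1 - x p.2‖ ^ 2)))]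
    have expand : ∀ p : Fin n × Fin n, g p s
        = w p.1 * w p.2 * s ^ (-1 - α)
          - w p.1 * w p.2 * Real.exp (-(s * r p)) * s ^ (-1 - α) := by
      intro p; rw [hg]; ring
    rw [Finset.sum_congr rfl (fun p _ => expand p), Finset.sum_sub_distrib]
    rw [show ∑ p : Fin n × Fin n, w p.1 * w p.2 * s ^ (-1 - α)
        = (∑ p : Fin n × Fin n, w p.1 * w p.2) * s ^ (-1 - α) by rw [Finset.sum_mul]]
    rw [show ∑ p : Fin n × Fin n, w p.1 * w p.2 = 0 by
      rw [Fintype.sum_prod_type]; exact hzero]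
    rw [Finset.sum_mul]
    rw [show (∑ p : Fin n × Fin n, w p.1 * w p.2 * Real.exp (-(s * r p)) * s ^ (-1 - α))
        = (∑ p : Fin n × Fin n, w p.1 * w p.2 * Real.exp (-(s * r p))) * s ^ (-1 - α) by
      rw [Finset.sum_mul]]
    ring
  -- integrability of h := G * s^(-1-α)
  have hsum_int : IntegrableOn (fun s => ∑ p : Fin n × Fin n, g p s) (Ioi 0) :=
    integrable_finset_sum _ (fun p _ => hgint p)
  have hh_int : IntegrableOn (fun s => G s * s ^ (-1 - α)) (Ioi 0) := by
    have h3 : IntegrableOn (fun s => -(∑ p : Fin n × Fin n, g p s)) (Ioi 0) := hsum_int.neg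
    refine h3.congr_fun (fun s _ => ?_) measurableSet_Ioi
    dsimp only; rw [step2 s]; ring
  -- Step 3 : positivity of ∫ h
  have hppos : 0 < ∑ i, w i * w i := by
    apply Finset.sum_pos' (fun i _ => mul_self_nonneg (w i))
    exact ⟨i0, Finset.mem_univ i0, mul_self_pos.mpr hi0⟩
  have hGlim : Tendsto G atTop (𝓝 (∑ i, w i * w i)) := by
    have : Tendsto (fun s => ∑ p : Fin n × Fin n,
        w p.1 * w p.2 * Real.exp (-(s * r p))) atTop
        (𝓝 (∑ p : Fin n × Fin n, if p.1 = p.2 then w p.1 * w p.2 else 0)) := by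
      apply tendsto_finset_sum
      intro p _
      by_cases hp : p.1 = p.2
      · simp only [hp, if_pos]
        have : (fun s : ℝ => w p.2 * w p.2 * Real.exp (-(s * r p)))
            = fun _ => w p.2 * w p.2 := by
          funext s
          have : r p = 0 := by rw [hr]; simp [hp]
          rw [this]; simp
        rw [this]
        exact tendsto_const_nhds
      · simp only [hp, if_neg]
        have hrp : 0 < r p := by
          have hne : x p.1 - x p.2 ≠ 0 := sub_ne_zero.mpr (fun h => hp (hx h))
          show 0 < ‖x p.1 - x p.2‖ ^ 2
          exact pow_pos (norm_pos_iff.mpr hne) 2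
        have h1 : Tendsto (fun s : ℝ => -(s * r p)) atTop atBot :=
          tendsto_neg_atTop_atBot.comp (Tendsto.atTop_mul_const hrp tendsto_id)
        have h2 : Tendsto (fun s : ℝ => Real.exp (-(s * r p))) atTop (𝓝 0) :=
          Real.tendsto_exp_atBot.comp h1
        simpa using h2.const_mul (w p.1 * w p.2)
    have heq : (∑ p : Fin n × Fin n, if p.1 = p.2 then w p.1 * w p.2 else 0)
        = ∑ i, w i * w i := by
      rw [Fintype.sum_prod_type]
      simp [Finset.sum_ite_eq']
    rw [heq] at this
    have hGeq : G = fun s => ∑ p : Fin n × Fin n, w p.1 * w p.2 * Real.exp (-(s * r p)) := by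
      funext s
      rw [hGdef]
      simp only []
      rw [← Fintype.sum_prod_type (f := fun p : Fin n × Fin n =>
        w p.1 * w p.2 * Real.exp (-(s * ‖x p.1 - x p.2‖ ^ 2)))]
    rw [hGeq]
    exact this
  have hev : ∀ᶠ s in atTop, (∑ i, w i * w i) / 2 < G s :=
    hGlim.eventually_const_lt (by linarith)
  obtain ⟨s₀, hs₀⟩ := eventually_atTop.mp hev
  set s₁ := max s₀ 1 with hs₁
  have hIpos : 0 < ∫ s in Ioi (0:ℝ), G s * s ^ (-1 - α) := by
    rw [setIntegral_pos_iff_support_of_nonneg_ae]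
    · refine lt_of_lt_of_le ?_ (measure_mono (show Ici s₁ ⊆
        (Function.support fun s => G s * s ^ (-1 - α)) ∩ Ioi 0 from ?_))
      · rw [Real.volume_Ici]; exact ENNReal.zero_lt_top -- maybe different name
      · intro s hs
        have hs1 : (1:ℝ) ≤ s := le_trans (le_max_right _ _) hs
        have hspos : (0:ℝ) < s := lt_of_lt_of_le one_pos hs1
        have hGs : 0 < G s := lt_trans (half_pos hppos) (hs₀ s (le_trans (le_max_left _ _) hs))
        constructor
        · exact ne_of_gt (mul_pos hGs (Real.rpow_pos_of_pos hspos _))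
        · exact hspos
    · filter_upwards [ae_restrict_mem measurableSet_Ioi] with s hs
      exact mul_nonneg (gaussian_psd x w (le_of_lt hs)) (Real.rpow_nonneg (le_of_lt hs) _)
    · exact hh_int
  -- conclude
  rw [step1, setIntegral_congr_fun measurableSet_Ioi (fun s _ => step2 s), integral_neg]
  linarith




/-- Main theorem: the image of any isometric embedding of the `α`-snowflake of an
`n`-point subset of a Hilbert space into a Euclidean space is affinely independent;
in particular, for `n ≥ 2` the snowflake does not embed isometrically into `ℝ^(n-2)`. -/
theorem snowflake_embedding_affineIndependent {H : Type*} [NormedAddCommGroup H]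
    [InnerProductSpace ℝ H] [CompleteSpace H]
    (n : ℕ) (x : Fin n → H) (hx : Function.Injective x) (α : ℝ) (hα₀ : 0 < α) (hα₁ : α < 1) :
    (∀ k : ℕ, ∀ f : Fin n → EuclideanSpace ℝ (Fin k),
      (∀ i j, ‖f i - f j‖ = ‖x i - x j‖ ^ α) → AffineIndependent ℝ f) ∧
    (2 ≤ n → ¬ ∃ f : Fin n → EuclideanSpace ℝ (Fin (n - 2)),
      ∀ i j, ‖f i - f j‖ = ‖x i - x j‖ ^ α) := by
  have part1 : ∀ k : ℕ, ∀ f : Fin n → EuclideanSpace ℝ (Fin k),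
      (∀ i j, ‖f i - f j‖ = ‖x i - x j‖ ^ α) → AffineIndependent ℝ f := by
    intro k f hf
    rw [affineIndependent_iff_of_fintype]
    intro w hw0 hvsub
    by_contra hne
    push_neg at hne
    obtain ⟨i0, hi0⟩ := hne
    have hF : ∑ i, w i • f i = 0 := by
      rwa [Finset.weightedVSub_eq_linear_combination _ hw0] at hvsub
    -- the squared norms of the embedded differences
    have hd : ∀ i j, ((‖x i - x j‖ ^ 2 : ℝ) ^ α) = ‖f i - f j‖ ^ 2 := by
      intro i j
      rw [hf i j, ← Real.rpow_natCast (‖x i - x j‖ ^ α) 2,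
        ← Real.rpow_natCast ‖x i - x j‖ 2,
        ← Real.rpow_mul (norm_nonneg _), ← Real.rpow_mul (norm_nonneg _)]
      norm_num [mul_comm]
    -- the quadratic form on the embedded points vanishes
    have hQ : ∑ i, ∑ j, w i * w j * ‖f i - f j‖ ^ 2 = 0 := by
      have expand : ∀ i j : Fin n, w i * w j * ‖f i - f j‖ ^ 2
          = w i * w j * ‖f i‖ ^ 2 + w i * w j * ‖f j‖ ^ 2
            - 2 * (w i * (w j * (inner ℝ (f i) (f j) : ℝ))) := by
        intro i j
        rw [norm_sub_sq_real]
        ring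
      simp_rw [expand]
      have h1 : ∑ i, ∑ j, (w i * w j * ‖f i‖ ^ 2 + w i * w j * ‖f j‖ ^ 2
            - 2 * (w i * (w j * (inner ℝ (f i) (f j) : ℝ))))
          = (∑ i, ∑ j, w i * w j * ‖f i‖ ^ 2) + (∑ i, ∑ j, w i * w j * ‖f j‖ ^ 2)
            - 2 * ∑ i, ∑ j, w i * (w j * (inner ℝ (f i) (f j) : ℝ)) := by
        rw [Finset.mul_sum, ← Finset.sum_add_distrib, ← Finset.sum_sub_distrib]
        refine Finset.sum_congr rfl fun i _ => ?_
        rw [Finset.mul_sum, ← Finset.sum_add_distrib, ← Finset.sum_sub_distrib]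
      rw [h1]
      have h2 : ∑ i, ∑ j, w i * w j * ‖f i‖ ^ 2 = 0 := by
        refine Finset.sum_eq_zero fun i _ => ?_
        rw [show ∑ j, w i * w j * ‖f i‖ ^ 2 = w i * ‖f i‖ ^ 2 * ∑ j, w j by
          rw [Finset.mul_sum]; exact Finset.sum_congr rfl fun j _ => by ring]
        rw [hw0, mul_zero]
      have h3 : ∑ i, ∑ j, w i * w j * ‖f j‖ ^ 2 = 0 := by
        rw [Finset.sum_comm]
        refine Finset.sum_eq_zero fun j _ => ?_
        rw [show ∑ i, w i * w j * ‖f j‖ ^ 2 = w j * ‖f j‖ ^ 2 * ∑ i, w i by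
          rw [Finset.mul_sum]; exact Finset.sum_congr rfl fun i _ => by ring]
        rw [hw0, mul_zero]
      have h4 : ∑ i, ∑ j, w i * (w j * (inner ℝ (f i) (f j) : ℝ)) = 0 := by
        refine Finset.sum_eq_zero fun i _ => ?_
        have : ∑ j, w i * (w j * (inner ℝ (f i) (f j) : ℝ))
            = w i * (inner ℝ (f i) (∑ j, w j • f j) : ℝ) := by
          rw [inner_sum, Finset.mul_sum]
          refine Finset.sum_congr rfl fun j _ => ?_
          rw [real_inner_smul_right]
        rw [this, hF, inner_zero_right, mul_zero]
      rw [h2, h3, h4]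
      ring
    have hneg := snow_neg x hx hα₀ hα₁ w hw0 hi0
    rw [show ∑ i, ∑ j, w i * w j * ((‖x i - x j‖ ^ 2) ^ α)
        = ∑ i, ∑ j, w i * w j * ‖f i - f j‖ ^ 2 from
      Finset.sum_congr rfl fun i _ => Finset.sum_congr rfl fun j _ => by rw [hd i j]] at hneg
    rw [hQ, zero_mul] at hneg
    exact lt_irrefl 0 hneg
  refine ⟨part1, ?_⟩
  rintro hn ⟨f, hf⟩
  have hAI := part1 (n - 2) f hf
  have hcard := hAI.card_le_finrank_succ
  have hle : Module.finrank ℝ (vectorSpan ℝ (Set.range f)) ≤ n - 2 := by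
    have := Submodule.finrank_le (vectorSpan ℝ (Set.range f))
    rwa [finrank_euclideanSpace_fin] at this
  rw [Fintype.card_fin] at hcard
  omega
end

section
/- Let X = {x₁, …, xₙ} be a finite metric space and let D be the n × n matrix with D_{ij} = d(xᵢ, xⱼ)². Then X embeds isometrically into a real Hilbert space if and only if for every Λ = (λ₁, …, λₙ) ∈ ℝⁿ with Σᵢ λᵢ = 0, we have Λ D Λᵀ ≤ 0. -/
open Finset
open scoped MatrixOrder

/-- Schoenberg's characterization: a finite metric space embeds isometrically into a
real Hilbert space iff its squared distance matrix is conditionally negative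
semidefinite. -/
theorem schoenberg_embedding_iff_negType (X : Type*) [MetricSpace X] [Fintype X] :
    (∃ f : X → lp (fun _ : ℕ => ℝ) 2, Isometry f) ↔
      ∀ lam : X → ℝ, ∑ i, lam i = 0 →
        ∑ i, ∑ j, lam i * lam j * dist i j ^ 2 ≤ 0 := by
  constructor
  · rintro ⟨f, hf⟩
    intro lam hlam
    have hd : ∀ i j : X, dist i j ^ 2
        = ‖f i‖ ^ 2 + ‖f j‖ ^ 2 - 2 * inner ℝ (f i) (f j) := by
      intro i j
      rw [← hf.dist_eq i j, dist_eq_norm, @norm_sub_sq_real]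
      ring
    have hg : (inner ℝ (∑ i, lam i • f i) (∑ i, lam i • f i) : ℝ)
        = ∑ i, ∑ j, lam i * lam j * inner ℝ (f i) (f j) := by
      rw [sum_inner]
      refine Finset.sum_congr rfl fun i _ => ?_
      rw [real_inner_smul_left, inner_sum, Finset.mul_sum]
      refine Finset.sum_congr rfl fun j _ => ?_
      rw [real_inner_smul_right]; ring
    have key : ∑ i, ∑ j, lam i * lam j * dist i j ^ 2
        = -(2 * inner ℝ (∑ i, lam i • f i) (∑ i, lam i • f i) : ℝ) := by
      rw [hg]
      have h1 : ∀ i j : X, lam i * lam j * dist i j ^ 2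
          = lam i * ‖f i‖ ^ 2 * lam j + lam i * (lam j * ‖f j‖ ^ 2)
            - 2 * (lam i * (lam j * inner ℝ (f i) (f j))) := by
        intro i j; rw [hd i j]; ring
      simp_rw [h1, Finset.sum_sub_distrib, Finset.sum_add_distrib, ← Finset.mul_sum,
        ← Finset.sum_mul, hlam, Finset.mul_sum]
      ring_nf
      simp [Finset.mul_sum, mul_comm, mul_left_comm]
    rw [key]
    have := real_inner_self_nonneg (x := ∑ i, lam i • f i)
    linarith
  · intro h
    classical
    rcases isEmpty_or_nonempty X with hX | hX
    · exact ⟨fun _ => 0, fun x => (IsEmpty.false x).elim⟩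
    obtain ⟨x₀⟩ := hX
    set K : Matrix X X ℝ := fun i j =>
      (dist x₀ i ^ 2 + dist x₀ j ^ 2 - dist i j ^ 2) / 2 with hKdef
    have hK0 : ∀ j, K x₀ j = 0 := by
      intro j; simp [hKdef]
    have hK0' : ∀ i, K i x₀ = 0 := by
      intro i; simp [hKdef, dist_comm]
    have hKsymm : ∀ i j, K i j = K j i := by
      intro i j; simp [hKdef, dist_comm]; ring
    have hKpsd : K.PosSemidef := by
      refine Matrix.posSemidef_iff_dotProduct_mulVec.mpr ⟨?_, ?_⟩
      · ext i j
        simp [Matrix.conjTranspose_apply, hKsymm i j]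
      · intro mu
        set lam : X → ℝ := fun i => mu i - (if i = x₀ then ∑ k, mu k else 0) with hlamdef
        have hsum : ∑ i, lam i = 0 := by
          simp [hlamdef, Finset.sum_sub_distrib]
        have hiff : ∀ i j, lam i * lam j * K i j = mu i * mu j * K i j := by
          intro i j
          by_cases hi : i = x₀
          · subst hi; simp [hK0]
          · by_cases hj : j = x₀
            · subst hj; simp [hK0']
            · simp [hlamdef, hi, hj]
        have hdK : ∀ i j : X, dist i j ^ 2
            = dist x₀ i ^ 2 + dist x₀ j ^ 2 - 2 * K i j := by
          intro i j; simp [hKdef]; ring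
        have key : ∑ i, ∑ j, lam i * lam j * dist i j ^ 2
            = -2 * ∑ i, ∑ j, lam i * lam j * K i j := by
          have h1 : ∀ i j : X, lam i * lam j * dist i j ^ 2
              = lam i * dist x₀ i ^ 2 * lam j + lam i * (lam j * dist x₀ j ^ 2)
                - 2 * (lam i * (lam j * K i j)) := by
            intro i j; rw [hdK i j]; ring
          simp_rw [h1, Finset.sum_sub_distrib, Finset.sum_add_distrib, ← Finset.mul_sum,
            ← Finset.sum_mul, hsum, Finset.mul_sum]
          ring_nf
          simp only [zero_mul, Finset.sum_const_zero, zero_sub, ← Finset.sum_neg_distrib]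
        have hle := h lam hsum
        rw [key] at hle
        have hKK : (0:ℝ) ≤ ∑ i, ∑ j, mu i * mu j * K i j := by
          have : (0:ℝ) ≤ ∑ i, ∑ j, lam i * lam j * K i j := by linarith
          simpa [hiff] using this
        have hdot : dotProduct (star mu) (K.mulVec mu) = ∑ i, ∑ j, mu i * mu j * K i j := by
          simp [dotProduct, Matrix.mulVec, Finset.mul_sum]
          exact Finset.sum_congr rfl fun i _ => Finset.sum_congr rfl fun j _ => by ring
        rw [hdot]; exact hKK
    -- square root
    set B := CFC.sqrt K with hBdef
    have hBsymm : ∀ i j, B i j = B j i := by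
      intro i j
      have h2 := (Matrix.nonneg_iff_posSemidef.mp (CFC.sqrt_nonneg K)).1.apply j i
      rw [hBdef]
      simpa using h2
    have hBK : ∀ i j, ∑ k, B i k * B j k = K i j := by
      intro i j
      have := CFC.sqrt_mul_sqrt_self K hKpsd.nonneg
      calc ∑ k, B i k * B j k = ∑ k, B i k * B k j := by
            exact Finset.sum_congr rfl fun k _ => by rw [hBsymm j k]
        _ = (B * B) i j := rfl
        _ = K i j := by rw [this]
    -- embedding
    set e : X → ℕ := fun k => (Fintype.equivFin X k : ℕ) with hedef
    have he : Function.Injective e := fun a b hab =>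
      (Fintype.equivFin X).injective (Fin.val_injective hab)
    set f : X → lp (fun _ : ℕ => ℝ) 2 := fun i =>
      ∑ k, B i k • lp.single 2 (e k) (1:ℝ) with hfdef
    have hinner : ∀ i j, (inner ℝ (f i) (f j) : ℝ) = K i j := by
      intro i j
      rw [hfdef]
      simp only
      rw [sum_inner, ← hBK i j]
      refine Finset.sum_congr rfl fun k _ => ?_
      rw [real_inner_smul_left, inner_sum]
      have : ∀ l ∈ (Finset.univ : Finset X),
          (inner ℝ ((lp.single 2 (e k) (1:ℝ)) : lp (fun _ : ℕ => ℝ) 2)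
            (B j l • lp.single 2 (e l) (1:ℝ)) : ℝ)
          = if l = k then B j l else 0 := by
        intro l _
        rw [real_inner_smul_right, lp.inner_single_left]
        by_cases hlk : l = k
        · subst hlk
          rw [lp.single_apply_self (E := fun _ : ℕ => ℝ) 2 (e l) (1:ℝ)]
          simp
        · rw [lp.single_apply_ne (E := fun _ : ℕ => ℝ) 2 (e l) (1:ℝ)
              (fun hc => hlk (he hc).symm)]
          simp [hlk]
      rw [Finset.sum_congr rfl this, Finset.sum_ite_eq' Finset.univ k (fun l => B j l)]
      simp
    have hdist : ∀ i j : X, ‖f i - f j‖ = dist i j := by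
      intro i j
      have h2 : ‖f i - f j‖ ^ 2 = dist i j ^ 2 := by
        rw [← real_inner_self_eq_norm_sq]
        rw [inner_sub_sub_self]
        rw [hinner, hinner, hinner, hinner]
        rw [hKsymm j i]
        simp only [hKdef]
        simp [dist_self]
        ring
      exact (sq_eq_sq₀ (norm_nonneg _) dist_nonneg).mp h2
    refine ⟨f, Isometry.of_dist_eq fun i j => ?_⟩
    rw [dist_eq_norm, hdist]
end

section
/- Let X be an n-point subset of a real Hilbert space and let 0 < α < 1. Then the snowflake space X^α embeds isometrically into ℝ^{n-1}, and n-1 is the minimal such dimension: X^α embeds isometrically into ℝ^{n-1} but not into ℝ^{n-2}. -/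
open Finset Real Nat MeasureTheory RealInnerProductSpace

namespace Snowflake

variable {γ : ℝ}

/-- The snowflake integrand. -/
noncomputable def snowKer (γ t l : ℝ) : ℝ := (1 - Real.exp (-(t * l))) * l ^ (-1 - γ)

lemma snowKer_contOn (γ t : ℝ) : ContinuousOn (snowKer γ t) (Set.Ioi 0) := by
  unfold snowKer
  apply ContinuousOn.mul
  · exact (continuous_const.sub ((continuous_const.mul continuous_id).neg.rexp)).continuousOn
  · exact fun x hx => (Real.continuousAt_rpow_const x _ (Or.inl (ne_of_gt hx))).continuousWithinAt

lemma snowKer_nonneg (γ : ℝ) {t : ℝ} (ht : 0 ≤ t) {l : ℝ} (hl : 0 < l) :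
    0 ≤ snowKer γ t l := by
  apply mul_nonneg
  · simp only [sub_nonneg, Real.exp_le_one_iff, Left.neg_nonpos_iff]
    positivity
  · positivity

lemma snowKer_integrable (hγ₀ : 0 < γ) (hγ₁ : γ < 1) {t : ℝ} (ht : 0 ≤ t) :
    IntegrableOn (snowKer γ t) (Set.Ioi 0) := by
  have hmeas : AEStronglyMeasurable (snowKer γ t) (volume.restrict (Set.Ioi 0)) :=
    (snowKer_contOn γ t).aestronglyMeasurable measurableSet_Ioi
  rw [show Set.Ioi (0:ℝ) = Set.Ioc 0 1 ∪ Set.Ioi 1 by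
    rw [Set.Ioc_union_Ioi_eq_Ioi zero_le_one]]
  apply IntegrableOn.union
  · -- near 0: bound by t * l ^ (-γ)
    have hint : IntegrableOn (fun l : ℝ => t * l ^ (-γ)) (Set.Ioc 0 1) := by
      rw [integrableOn_Ioc_iff_integrableOn_Ioo]
      exact ((intervalIntegral.integrableOn_Ioo_rpow_iff zero_lt_one).2 (by linarith)).const_mul t
    refine Integrable.mono' hint
      (hmeas.mono_set (Set.Ioc_subset_Ioi_self.trans (le_refl _))) ?_
    filter_upwards [ae_restrict_mem measurableSet_Ioc] with l hl
    rcases hl with ⟨hl0, hl1⟩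
    rw [Real.norm_eq_abs, abs_of_nonneg (snowKer_nonneg γ ht hl0)]
    unfold snowKer
    have h1 : 1 - Real.exp (-(t * l)) ≤ t * l := by
      have := Real.add_one_le_exp (-(t*l))
      nlinarith [Real.exp_pos (-(t*l))]
    have h2 : (0:ℝ) ≤ l ^ (-1 - γ) := by positivity
    calc (1 - Real.exp (-(t * l))) * l ^ (-1 - γ) ≤ (t * l) * l ^ (-1 - γ) :=
          mul_le_mul_of_nonneg_right h1 h2
      _ = t * (l ^ (1:ℝ) * l ^ (-1 - γ)) := by rw [Real.rpow_one]; ring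
      _ = t * l ^ (-γ) := by rw [← Real.rpow_add hl0]; ring_nf
  · -- near ∞: bound by l ^ (-1 - γ)
    have hint : IntegrableOn (fun l : ℝ => l ^ (-1 - γ)) (Set.Ioi 1) :=
      integrableOn_Ioi_rpow_of_lt (by linarith) zero_lt_one
    refine Integrable.mono' hint (hmeas.mono_set (Set.Ioi_subset_Ioi zero_le_one)) ?_
    filter_upwards [ae_restrict_mem measurableSet_Ioi] with l hl
    have hl0 : (0:ℝ) < l := lt_trans zero_lt_one hl
    rw [Real.norm_eq_abs, abs_of_nonneg (snowKer_nonneg γ ht hl0)]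
    unfold snowKer
    have h2 : (0:ℝ) ≤ l ^ (-1 - γ) := by positivity
    nlinarith [Real.exp_pos (-(t*l))]

/-- The constant `∫_0^∞ (1 - e^{-l}) l^{-1-γ} dl`. -/
noncomputable def snowConst (γ : ℝ) : ℝ := ∫ l in Set.Ioi (0:ℝ), snowKer γ 1 l

lemma snowConst_pos (hγ₀ : 0 < γ) (hγ₁ : γ < 1) : 0 < snowConst γ := by
  rw [snowConst]
  refine (setIntegral_pos_iff_support_of_nonneg_ae ?_ ?_).2 ?_
  · filter_upwards [ae_restrict_mem measurableSet_Ioi] with l hl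
    exact snowKer_nonneg γ zero_le_one hl
  · exact snowKer_integrable hγ₀ hγ₁ zero_le_one
  · have hsub : Set.Ioi (0:ℝ) ⊆ Function.support (snowKer γ 1) ∩ Set.Ioi 0 := by
      intro l hl
      refine ⟨?_, hl⟩
      have hl0 : (0:ℝ) < l := hl
      have h1 : Real.exp (-(1 * l)) < 1 := by
        rw [Real.exp_lt_one_iff]; linarith
      have h2 : (0:ℝ) < l ^ (-1 - γ) := by positivity
      have hpos : 0 < snowKer γ 1 l := by unfold snowKer; nlinarith
      exact hpos.ne'
    calc (0:ENNReal) < volume (Set.Ioi (0:ℝ)) := by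
          rw [Real.volume_Ioi]; exact ENNReal.zero_lt_top
      _ ≤ volume (Function.support (snowKer γ 1) ∩ Set.Ioi 0) := measure_mono hsub

/-- Scaling identity: `∫ snowKer γ t = t^γ * snowConst γ` for `t ≥ 0`. -/
lemma snowKer_integral (hγ₀ : 0 < γ) (hγ₁ : γ < 1) {t : ℝ} (ht : 0 ≤ t) :
    ∫ l in Set.Ioi (0:ℝ), snowKer γ t l = t ^ γ * snowConst γ := by
  rcases eq_or_lt_of_le ht with h | h
  · simp [← h, snowKer, Real.zero_rpow (ne_of_gt hγ₀)]
  set g : ℝ → ℝ := fun u => t ^ (1 + γ) * ((1 - Real.exp (-u)) * u ^ (-1 - γ)) with hg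
  have key : ∀ l ∈ Set.Ioi (0:ℝ), snowKer γ t l = g (t * l) := by
    intro l hl
    have hl0 : (0:ℝ) < l := hl
    simp only [hg, snowKer]
    rw [Real.mul_rpow h.le hl0.le]
    rw [show (-1 - γ) = -(1+γ) by ring, Real.rpow_neg h.le]
    have htp : (0:ℝ) < t ^ (1+γ) := Real.rpow_pos_of_pos h _
    rw [Real.rpow_neg hl0.le]
    field_simp
  rw [setIntegral_congr_fun measurableSet_Ioi key, integral_comp_mul_left_Ioi g 0 h]
  simp only [mul_zero, smul_eq_mul, hg]
  rw [MeasureTheory.integral_const_mul]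
  have heq : ∫ u in Set.Ioi (0:ℝ), (1 - Real.exp (-u)) * u ^ (-1 - γ) = snowConst γ := by
    rw [snowConst]
    apply setIntegral_congr_fun measurableSet_Ioi
    intro u hu
    simp [snowKer]
  rw [heq, Real.rpow_add h, Real.rpow_one]
  field_simp


variable {N m : ℕ}

local notation "E" => EuclideanSpace ℝ (Fin m)

lemma inner_eq_sum (u v : E) : (inner ℝ (u) (v) : ℝ) = ∑ t, u t * v t := by
  simp [PiLp.inner_apply, RCLike.inner_apply, conj_trivial, mul_comm]

/-- Expansion of the Hadamard power of a Gram matrix quadratic form as a sum of squares. -/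
lemma prod_inner_expand (ι : Type) [Fintype ι] [DecidableEq ι] (a : Fin N → ℝ) (z : Fin N → E) :
    ∑ i, ∑ j, a i * a j * ∏ _l : ι, (inner ℝ (z i) (z j) : ℝ)
      = ∑ T : ι → Fin m, (∑ i, a i * ∏ l, z i (T l)) ^ 2 := by
  have expand : ∀ i j : Fin N, ∏ _l : ι, (inner ℝ (z i) (z j) : ℝ)
      = ∑ T : ι → Fin m, (∏ l, z i (T l)) * (∏ l, z j (T l)) := by
    intro i j
    calc ∏ _l : ι, (inner ℝ (z i) (z j) : ℝ) = ∏ _l : ι, ∑ t, z i t * z j t := by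
          simp [inner_eq_sum]
      _ = ∑ T ∈ Fintype.piFinset (fun _ : ι => (univ : Finset (Fin m))),
            ∏ l, z i (T l) * z j (T l) := Finset.prod_univ_sum _ _
      _ = ∑ T : ι → Fin m, (∏ l, z i (T l)) * (∏ l, z j (T l)) := by
          rw [Fintype.piFinset_univ]
          exact Finset.sum_congr rfl fun T _ => Finset.prod_mul_distrib
  calc ∑ i, ∑ j, a i * a j * ∏ _l : ι, (inner ℝ (z i) (z j) : ℝ)
      = ∑ i, ∑ j, ∑ T : ι → Fin m,
          (a i * ∏ l, z i (T l)) * (a j * ∏ l, z j (T l)) := by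
        refine Finset.sum_congr rfl fun i _ => Finset.sum_congr rfl fun j _ => ?_
        rw [expand i j, Finset.mul_sum]
        exact Finset.sum_congr rfl fun T _ => by ring
    _ = ∑ i, ∑ T : ι → Fin m, ∑ j,
          (a i * ∏ l, z i (T l)) * (a j * ∏ l, z j (T l)) :=
        Finset.sum_congr rfl fun i _ => Finset.sum_comm
    _ = ∑ T : ι → Fin m, ∑ i, ∑ j,
          (a i * ∏ l, z i (T l)) * (a j * ∏ l, z j (T l)) :=
        Finset.sum_comm
    _ = ∑ T : ι → Fin m, (∑ i, a i * ∏ l, z i (T l)) ^ 2 := by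
        refine Finset.sum_congr rfl fun T _ => ?_
        rw [sq, Finset.sum_mul_sum]

/-- Strict positive definiteness of the kernel `exp ⟪·,·⟫` at distinct points. -/
lemma expGram_pos (z : Fin N → E) (hz : Function.Injective z)
    (a : Fin N → ℝ) (ha : a ≠ 0) :
    0 < ∑ i, ∑ j, a i * a j * Real.exp (inner ℝ (z i) (z j) : ℝ) := by
  classical
  set c : ℕ → ℝ := fun k => ∑ i, ∑ j, a i * a j * ((inner ℝ (z i) (z j) : ℝ) ^ k / k !) with hc
  have hsumpair : ∀ p : Fin N × Fin N,
      Summable (fun k : ℕ => a p.1 * a p.2 * ((inner ℝ (z p.1) (z p.2) : ℝ) ^ k / k !)) := by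
    intro p
    exact (Real.summable_pow_div_factorial _).mul_left _
  have hsummable : Summable c := by
    have : Summable (fun k : ℕ => ∑ p : Fin N × Fin N,
        a p.1 * a p.2 * ((inner ℝ (z p.1) (z p.2) : ℝ) ^ k / k !)) :=
      summable_sum fun p _ => hsumpair p
    refine this.congr fun k => ?_
    rw [Fintype.sum_prod_type]
  have hS : ∑ i, ∑ j, a i * a j * Real.exp (inner ℝ (z i) (z j) : ℝ) = ∑' k, c k := by
    have hexp : ∀ s : ℝ, Real.exp s = ∑' k : ℕ, s ^ k / k ! := by
      intro s
      rw [Real.exp_eq_exp_ℝ, NormedSpace.exp_eq_tsum_div]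
    calc ∑ i, ∑ j, a i * a j * Real.exp (inner ℝ (z i) (z j) : ℝ)
        = ∑ p : Fin N × Fin N, ∑' k : ℕ,
            a p.1 * a p.2 * ((inner ℝ (z p.1) (z p.2) : ℝ) ^ k / k !) := by
          rw [Fintype.sum_prod_type]
          refine Finset.sum_congr rfl fun i _ => Finset.sum_congr rfl fun j _ => ?_
          rw [hexp, ← tsum_mul_left]
      _ = ∑' k : ℕ, ∑ p : Fin N × Fin N,
            a p.1 * a p.2 * ((inner ℝ (z p.1) (z p.2) : ℝ) ^ k / k !) :=
          (Summable.tsum_finsetSum fun p _ => hsumpair p).symm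
      _ = ∑' k, c k := by
          refine tsum_congr fun k => ?_
          rw [hc, Fintype.sum_prod_type]
  have hck : ∀ k : ℕ, c k = (∑ T : Fin k → Fin m,
      (∑ i, a i * ∏ l, z i (T l)) ^ 2) / k ! := by
    intro k
    simp only [hc]
    have : ∑ i, ∑ j, a i * a j * ((inner ℝ (z i) (z j) : ℝ) ^ k / k !)
        = (∑ i, ∑ j, a i * a j * (inner ℝ (z i) (z j) : ℝ) ^ k) / k ! := by
      rw [Finset.sum_div]
      refine Finset.sum_congr rfl fun i _ => ?_
      rw [Finset.sum_div]
      exact Finset.sum_congr rfl fun j _ => by ring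
    rw [this, ← prod_inner_expand (Fin k) a z]
    congr 1
    refine Finset.sum_congr rfl fun i _ => Finset.sum_congr rfl fun j _ => ?_
    rw [Finset.prod_const, Finset.card_univ, Fintype.card_fin]
  have hnonneg : ∀ k, 0 ≤ c k := by
    intro k
    rw [hck k]
    apply div_nonneg (Finset.sum_nonneg fun T _ => sq_nonneg _) (by positivity)
  rw [hS]
  rcases lt_or_eq_of_le (tsum_nonneg hnonneg) with h | h
  · exact h
  exfalso
  -- all coefficients vanish
  have hczero : ∀ k, c k = 0 := by
    intro k
    have h1 : c k ≤ ∑' k, c k := Summable.le_tsum hsummable k fun j _ => hnonneg j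
    rw [← h] at h1
    exact le_antisymm h1 (hnonneg k)
  have hB : ∀ (k : ℕ) (T : Fin k → Fin m), ∑ i, a i * ∏ l, z i (T l) = 0 := by
    intro k T
    have h0 : (∑ T : Fin k → Fin m, (∑ i, a i * ∏ l, z i (T l)) ^ 2) = 0 := by
      have := hczero k
      rw [hck k] at this
      have hk : (0:ℝ) < k ! := by positivity
      field_simp at this
      simpa using this
    have := (Finset.sum_eq_zero_iff_of_nonneg fun T _ => sq_nonneg _).1 h0 T (mem_univ T)
    exact (pow_eq_zero_iff two_ne_zero).1 this
  -- vanishing against products of linear forms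
  have hQ : ∀ (ι : Type) [Fintype ι] [DecidableEq ι] (v : ι → E),
      ∑ i, a i * ∏ l, (inner ℝ (v l) (z i) : ℝ) = 0 := by
    intro ι _ _ v
    have expand : ∀ i, ∏ l : ι, (inner ℝ (v l) (z i) : ℝ)
        = ∑ T : ι → Fin m, (∏ l, v l (T l)) * ∏ l, z i (T l) := by
      intro i
      calc ∏ l : ι, (inner ℝ (v l) (z i) : ℝ) = ∏ l : ι, ∑ t, v l t * z i t := by
            simp [inner_eq_sum]
        _ = ∑ T ∈ Fintype.piFinset (fun _ : ι => (univ : Finset (Fin m))),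
              ∏ l, v l (T l) * z i (T l) := Finset.prod_univ_sum _ _
        _ = ∑ T : ι → Fin m, (∏ l, v l (T l)) * ∏ l, z i (T l) := by
            rw [Fintype.piFinset_univ]
            exact Finset.sum_congr rfl fun T _ => Finset.prod_mul_distrib
    calc ∑ i, a i * ∏ l : ι, (inner ℝ (v l) (z i) : ℝ)
        = ∑ i, ∑ T : ι → Fin m, (∏ l, v l (T l)) * (a i * ∏ l, z i (T l)) := by
          refine Finset.sum_congr rfl fun i _ => ?_
          rw [expand i, Finset.mul_sum]
          exact Finset.sum_congr rfl fun T _ => by ring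
      _ = ∑ T : ι → Fin m, ∑ i, (∏ l, v l (T l)) * (a i * ∏ l, z i (T l)) :=
          Finset.sum_comm
      _ = ∑ T : ι → Fin m, (∏ l, v l (T l)) * ∑ i, a i * ∏ l, z i (T l) := by
          refine Finset.sum_congr rfl fun T _ => ?_
          rw [Finset.mul_sum]
      _ = 0 := by
          refine Finset.sum_eq_zero fun T _ => ?_
          have : ∑ i, a i * ∏ l : ι, z i (T l) = 0 := by
            set e := Fintype.equivFin ι
            have : ∀ i, ∏ l : ι, z i (T l) = ∏ j : Fin (Fintype.card ι), z i (T (e.symm j)) :=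
              fun i => (Equiv.prod_comp e.symm fun l => z i (T l)).symm
            simp only [this]
            exact hB (Fintype.card ι) (fun j => T (e.symm j))
          rw [this, mul_zero]
  -- vanishing against products of affine forms
  have hP : ∀ (ι : Type) [Fintype ι] [DecidableEq ι] (v : ι → E) (cc : ι → ℝ),
      ∑ i, a i * ∏ l, ((inner ℝ (v l) (z i) : ℝ) + cc l) = 0 := by
    intro ι _ _ v cc
    have expand : ∀ i, ∏ l : ι, ((inner ℝ (v l) (z i) : ℝ) + cc l)
        = ∑ t ∈ (univ : Finset ι).powerset,
            (∏ l ∈ t, (inner ℝ (v l) (z i) : ℝ)) * ∏ l ∈ univ \ t, cc l :=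
      fun i => Finset.prod_add _ _ _
    calc ∑ i, a i * ∏ l, ((inner ℝ (v l) (z i) : ℝ) + cc l)
        = ∑ i, ∑ t ∈ (univ : Finset ι).powerset,
            (∏ l ∈ univ \ t, cc l) * (a i * ∏ l ∈ t, (inner ℝ (v l) (z i) : ℝ)) := by
          refine Finset.sum_congr rfl fun i _ => ?_
          rw [expand i, Finset.mul_sum]
          exact Finset.sum_congr rfl fun t _ => by ring
      _ = ∑ t ∈ (univ : Finset ι).powerset, ∑ i,
            (∏ l ∈ univ \ t, cc l) * (a i * ∏ l ∈ t, (inner ℝ (v l) (z i) : ℝ)) :=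
          Finset.sum_comm
      _ = 0 := by
          refine Finset.sum_eq_zero fun t _ => ?_
          rw [← Finset.mul_sum]
          have : ∑ i, a i * ∏ l ∈ t, (inner ℝ (v l) (z i) : ℝ) = 0 := by
            have hcoe : ∀ i, ∏ l ∈ t, (inner ℝ (v l) (z i) : ℝ)
                = ∏ l : {x // x ∈ t}, (inner ℝ (v l.1) (z i) : ℝ) :=
              fun i => (Finset.prod_coe_sort t _).symm
            simp only [hcoe]
            exact hQ {x // x ∈ t} (fun l => v l.1)
          rw [this, mul_zero]
  -- separation: conclude all coefficients vanish
  obtain ⟨i₀, hi₀⟩ := Function.ne_iff.1 ha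
  apply hi₀
  have hsep := hP {j : Fin N // j ≠ i₀} (fun j => z i₀ - z j.1)
    (fun j => -(inner ℝ (z i₀ - z j.1) (z j.1) : ℝ))
  have hterm : ∀ i : Fin N, a i * ∏ l : {j : Fin N // j ≠ i₀},
      ((inner ℝ (z i₀ - z l.1) (z i) : ℝ) + -(inner ℝ (z i₀ - z l.1) (z l.1) : ℝ))
      = a i * ∏ l : {j : Fin N // j ≠ i₀}, (inner ℝ (z i₀ - z l.1) (z i - z l.1) : ℝ) := by
    intro i
    congr 1
    refine Finset.prod_congr rfl fun l _ => ?_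
    rw [inner_sub_right]
    ring
  rw [Finset.sum_congr rfl (fun i _ => hterm i)] at hsep
  rw [Finset.sum_eq_single_of_mem i₀ (mem_univ i₀)] at hsep
  · have hpos : 0 < ∏ l : {j : Fin N // j ≠ i₀}, (inner ℝ (z i₀ - z l.1) (z i₀ - z l.1) : ℝ) := by
      apply Finset.prod_pos
      intro l _
      have hne : z i₀ - z l.1 ≠ 0 := by
        rw [sub_ne_zero]
        exact fun hzz => l.2 (hz hzz.symm)
      rw [real_inner_self_eq_norm_sq]
      exact pow_pos (norm_pos_iff.2 hne) 2
    exact (mul_eq_zero.1 hsep).resolve_right (ne_of_gt hpos)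
  · intro i _ hii
    have : (inner ℝ (z i₀ - z i) (z i - z i) : ℝ) = 0 := by simp
    rw [Finset.prod_eq_zero (Finset.mem_univ (⟨i, hii⟩ : {j : Fin N // j ≠ i₀})) this, mul_zero]


/-- Strict positive definiteness of the Gaussian kernel at distinct points. -/
lemma gaussGram_pos (y : Fin N → E) (hy : Function.Injective y)
    (b : Fin N → ℝ) (hb : b ≠ 0) {s : ℝ} (hs : 0 < s) :
    0 < ∑ i, ∑ j, b i * b j * Real.exp (-(s * ‖y i - y j‖ ^ 2)) := by
  set r : ℝ := Real.sqrt (2 * s) with hr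
  have hr0 : 0 < r := Real.sqrt_pos.2 (by linarith)
  have hrr : r * r = 2 * s := Real.mul_self_sqrt (by linarith)
  set z : Fin N → E := fun i => r • y i with hz
  have hzinj : Function.Injective z := fun i j hij => by
    apply hy
    have := smul_right_injective E (ne_of_gt hr0) hij
    exact this
  set a : Fin N → ℝ := fun i => b i * Real.exp (-(s * ‖y i‖ ^ 2)) with haa
  have ha : a ≠ 0 := by
    obtain ⟨i, hi⟩ := Function.ne_iff.1 hb
    refine Function.ne_iff.2 ⟨i, ?_⟩
    simp only [haa, Pi.zero_apply]
    exact mul_ne_zero hi (Real.exp_ne_zero _)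
  have hpt : ∀ i j, b i * b j * Real.exp (-(s * ‖y i - y j‖ ^ 2))
      = a i * a j * Real.exp (inner ℝ (z i) (z j) : ℝ) := by
    intro i j
    have hinner : (inner ℝ (z i) (z j) : ℝ) = 2 * s * (inner ℝ (y i) (y j) : ℝ) := by
      simp only [hz, real_inner_smul_left, real_inner_smul_right]
      rw [← mul_assoc, hrr]
    have hexpand : ‖y i - y j‖ ^ 2
        = ‖y i‖ ^ 2 - 2 * (inner ℝ (y i) (y j) : ℝ) + ‖y j‖ ^ 2 := norm_sub_sq_real _ _
    simp only [haa]
    rw [hinner, hexpand, show -(s * (‖y i‖ ^ 2 - 2 * (inner ℝ (y i) (y j) : ℝ) + ‖y j‖ ^ 2))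
      = -(s * ‖y i‖ ^ 2) + -(s * ‖y j‖ ^ 2) + 2 * s * (inner ℝ (y i) (y j) : ℝ) by ring,
      Real.exp_add, Real.exp_add]
    ring
  calc (0:ℝ) < ∑ i, ∑ j, a i * a j * Real.exp (inner ℝ (z i) (z j) : ℝ) :=
        expGram_pos z hzinj a ha
    _ = ∑ i, ∑ j, b i * b j * Real.exp (-(s * ‖y i - y j‖ ^ 2)) := by
        exact Finset.sum_congr rfl fun i _ => Finset.sum_congr rfl fun j _ => (hpt i j).symm

/-- The key negativity lemma: `‖·‖^{2α}` is strictly conditionally negative definite. -/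
lemma key_neg (y : Fin N → E) (hy : Function.Injective y)
    {α : ℝ} (hα₀ : 0 < α) (hα₁ : α < 1)
    (c : Fin N → ℝ) (hc : c ≠ 0) (hsum : ∑ i, c i = 0) :
    ∑ i, ∑ j, c i * c j * (‖y i - y j‖ ^ 2) ^ α < 0 := by
  classical
  have hC := snowConst_pos hα₀ hα₁
  set Q := ∑ i, ∑ j, c i * c j * (‖y i - y j‖ ^ 2) ^ α with hQ
  by_contra hcon
  push_neg at hcon
  have hCQ : 0 ≤ snowConst α * Q := mul_nonneg hC.le hcon
  -- rewrite C * Q as an integral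
  set d : Fin N × Fin N → ℝ := fun p => ‖y p.1 - y p.2‖ ^ 2 with hd
  have hdnn : ∀ p, 0 ≤ d p := fun p => sq_nonneg _
  have hint : ∀ p : Fin N × Fin N, MeasureTheory.IntegrableOn
      (fun l => c p.1 * c p.2 * snowKer α (d p) l) (Set.Ioi 0) :=
    fun p => ((snowKer_integrable hα₀ hα₁ (hdnn p)).const_mul _)
  have h1 : snowConst α * Q
      = ∫ l in Set.Ioi (0:ℝ), ∑ p : Fin N × Fin N, c p.1 * c p.2 * snowKer α (d p) l := by
    rw [MeasureTheory.integral_finset_sum _ (fun p _ => hint p)]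
    have : ∀ p : Fin N × Fin N, ∫ l in Set.Ioi (0:ℝ), c p.1 * c p.2 * snowKer α (d p) l
        = c p.1 * c p.2 * ((d p) ^ α * snowConst α) := by
      intro p
      rw [MeasureTheory.integral_const_mul, snowKer_integral hα₀ hα₁ (hdnn p)]
    rw [Finset.sum_congr rfl fun p _ => this p]
    rw [hQ, Fintype.sum_prod_type]
    rw [Finset.mul_sum]
    refine Finset.sum_congr rfl fun i _ => ?_
    rw [Finset.mul_sum]
    exact Finset.sum_congr rfl fun j _ => by rw [hd]; ring
  -- the integrand equals minus the Gaussian quadratic form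
  set G : ℝ → ℝ := fun l =>
    (∑ i, ∑ j, c i * c j * Real.exp (-(l * ‖y i - y j‖ ^ 2))) * l ^ (-1 - α) with hG
  have h2 : ∀ l ∈ Set.Ioi (0:ℝ),
      ∑ p : Fin N × Fin N, c p.1 * c p.2 * snowKer α (d p) l = -G l := by
    intro l hl
    simp only [hG, snowKer, hd]
    have : ∀ p : Fin N × Fin N,
        c p.1 * c p.2 * ((1 - Real.exp (-(‖y p.1 - y p.2‖ ^ 2 * l))) * l ^ (-1 - α))
        = (c p.1 * c p.2 - c p.1 * c p.2 * Real.exp (-(l * ‖y p.1 - y p.2‖ ^ 2)))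
            * l ^ (-1 - α) := by
      intro p
      rw [mul_comm (‖y p.1 - y p.2‖ ^ 2) l]
      ring
    rw [Finset.sum_congr rfl fun p _ => this p, ← Finset.sum_mul, Finset.sum_sub_distrib]
    have hzero : ∑ p : Fin N × Fin N, c p.1 * c p.2 = 0 := by
      rw [Fintype.sum_prod_type, ← Finset.sum_mul_sum, hsum, mul_zero]
    rw [hzero, zero_sub, Fintype.sum_prod_type]
    ring
  have h3 : snowConst α * Q = -∫ l in Set.Ioi (0:ℝ), G l := by
    rw [h1, MeasureTheory.setIntegral_congr_fun measurableSet_Ioi h2,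
      MeasureTheory.integral_neg]
  -- the Gaussian integral is positive
  have hGpos : ∀ l ∈ Set.Ioi (0:ℝ), 0 < G l := by
    intro l hl
    have hl0 : (0:ℝ) < l := hl
    exact mul_pos (gaussGram_pos y hy c hc hl0) (Real.rpow_pos_of_pos hl0 _)
  have hGint : MeasureTheory.IntegrableOn G (Set.Ioi 0) := by
    have := (MeasureTheory.integrable_finset_sum (μ := MeasureTheory.volume.restrict (Set.Ioi 0))
      Finset.univ (fun p _ => hint p)).neg
    refine MeasureTheory.IntegrableOn.congr_fun this ?_ measurableSet_Ioi
    intro l hl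
    simp only [Pi.neg_apply]
    rw [h2 l hl]
    ring
  have h4 : 0 < ∫ l in Set.Ioi (0:ℝ), G l := by
    refine (MeasureTheory.setIntegral_pos_iff_support_of_nonneg_ae ?_ hGint).2 ?_
    · filter_upwards [MeasureTheory.ae_restrict_mem measurableSet_Ioi] with l hl
      exact (hGpos l hl).le
    · have hsub : Set.Ioi (0:ℝ) ⊆ Function.support G ∩ Set.Ioi 0 :=
        fun l hl => ⟨ne_of_gt (hGpos l hl), hl⟩
      calc (0:ENNReal) < MeasureTheory.volume (Set.Ioi (0:ℝ)) := by
            rw [Real.volume_Ioi]; exact ENNReal.zero_lt_top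
        _ ≤ MeasureTheory.volume (Function.support G ∩ Set.Ioi 0) :=
            MeasureTheory.measure_mono hsub
  rw [h3] at hCQ
  linarith

lemma sq_rpow {r : ℝ} (hr : 0 ≤ r) (α : ℝ) : (r ^ 2) ^ α = (r ^ α) ^ 2 := by
  rw [← Real.rpow_natCast r 2, ← Real.rpow_natCast (r ^ α) 2, ← Real.rpow_mul hr,
    ← Real.rpow_mul hr]
  norm_num [mul_comm]

/-- Expansion of the quadratic form in `η` at a vector summing to zero over the basepoint `0`. -/
lemma quad_expand {M : ℕ} (η : Fin (M+1) → Fin (M+1) → ℝ) (hdiag : η 0 0 = 0)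
    (c : Fin M → ℝ) :
    ∑ i, ∑ j, (Fin.cons (-(∑ k, c k)) c : Fin (M+1) → ℝ) i
        * (Fin.cons (-(∑ k, c k)) c : Fin (M+1) → ℝ) j * η i j
    = ∑ k : Fin M, ∑ l : Fin M,
        c k * c l * (η k.succ l.succ - η k.succ 0 - η 0 l.succ) := by
  set s := ∑ k, c k with hs
  set c' : Fin (M+1) → ℝ := Fin.cons (-s) c with hc'
  have e0 : c' 0 = -s := rfl
  have eS : ∀ k : Fin M, c' k.succ = c k := fun k => rfl
  have step1 : ∑ i, ∑ j, c' i * c' j * η i j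
      = (c' 0 * c' 0 * η 0 0 + ∑ l : Fin M, c' 0 * c' l.succ * η 0 l.succ)
        + ∑ k : Fin M, (c' k.succ * c' 0 * η k.succ 0
            + ∑ l : Fin M, c' k.succ * c' l.succ * η k.succ l.succ) := by
    rw [Fin.sum_univ_succ]
    congr 1
    · rw [Fin.sum_univ_succ]
    · exact Finset.sum_congr rfl fun k _ => by rw [Fin.sum_univ_succ]
  rw [step1, hdiag, mul_zero, zero_add, Finset.sum_add_distrib]
  simp only [e0, eS]
  have hQ : ∑ k : Fin M, ∑ l : Fin M, c k * c l * η 0 l.succ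
      = s * ∑ l : Fin M, c l * η 0 l.succ := by
    calc ∑ k : Fin M, ∑ l : Fin M, c k * c l * η 0 l.succ
        = ∑ k : Fin M, ∑ l : Fin M, c k * (c l * η 0 l.succ) :=
          Finset.sum_congr rfl fun k _ => Finset.sum_congr rfl fun l _ => by ring
      _ = (∑ k : Fin M, c k) * ∑ l : Fin M, c l * η 0 l.succ :=
          (Finset.sum_mul_sum _ _ _ _).symm
      _ = s * ∑ l : Fin M, c l * η 0 l.succ := by rw [← hs]
  have hP : ∑ k : Fin M, ∑ l : Fin M, c k * c l * η k.succ 0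
      = ∑ k : Fin M, c k * η k.succ 0 * s := by
    refine Finset.sum_congr rfl fun k _ => ?_
    calc ∑ l : Fin M, c k * c l * η k.succ 0
        = ∑ l : Fin M, (c k * η k.succ 0) * c l :=
          Finset.sum_congr rfl fun l _ => by ring
      _ = (c k * η k.succ 0) * ∑ l : Fin M, c l := (Finset.mul_sum _ _ _).symm
      _ = c k * η k.succ 0 * s := by rw [← hs]
  have hL1 : ∑ l : Fin M, -s * c l * η 0 l.succ
      = -(s * ∑ l : Fin M, c l * η 0 l.succ) := by
    have h1 : ∀ l : Fin M, -s * c l * η 0 l.succ = -(s * (c l * η 0 l.succ)) :=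
      fun l => by ring
    rw [Finset.sum_congr rfl fun l _ => h1 l, Finset.sum_neg_distrib, ← Finset.mul_sum]
  have hL2 : ∑ k : Fin M, c k * -s * η k.succ 0
      = -(∑ k : Fin M, c k * η k.succ 0 * s) := by
    have h1 : ∀ k : Fin M, c k * -s * η k.succ 0 = -(c k * η k.succ 0 * s) :=
      fun k => by ring
    rw [Finset.sum_congr rfl fun k _ => h1 k, Finset.sum_neg_distrib]
  have hR : ∑ k : Fin M, ∑ l : Fin M,
        c k * c l * (η k.succ l.succ - η k.succ 0 - η 0 l.succ)
      = (∑ k : Fin M, ∑ l : Fin M, c k * c l * η k.succ l.succ)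
        - (∑ k : Fin M, ∑ l : Fin M, c k * c l * η k.succ 0)
        - (∑ k : Fin M, ∑ l : Fin M, c k * c l * η 0 l.succ) := by
    simp only [mul_sub, Finset.sum_sub_distrib]
  rw [hL1, hL2, hR, hQ, hP]
  ring


/-- Any finite family in a real inner product space has an isometric (distances-preserving)
copy in some Euclidean space. -/
lemma exists_euclidean_copy {H : Type*} [NormedAddCommGroup H] [InnerProductSpace ℝ H]
    {N : ℕ} (x : Fin N → H) :
    ∃ (d : ℕ) (y : Fin N → EuclideanSpace ℝ (Fin d)),
      ∀ i j, ‖y i - y j‖ = ‖x i - x j‖ := by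
  set K := Submodule.span ℝ (Set.range x) with hK
  haveI : FiniteDimensional ℝ K := FiniteDimensional.span_of_finite ℝ (Set.finite_range x)
  set e := (stdOrthonormalBasis ℝ K).repr with he
  refine ⟨Module.finrank ℝ K, fun i => e ⟨x i, Submodule.subset_span ⟨i, rfl⟩⟩, fun i j => ?_⟩
  rw [← LinearIsometryEquiv.map_sub, LinearIsometryEquiv.norm_map]
  rfl

end Snowflake

open Finset Snowflake

/-- An `n`-point subset of a Hilbert space snowflaked with exponent `0 < α < 1`
embeds isometrically into `ℝ^(n-1)`, and this dimension is optimal: it does not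
embed isometrically into `ℝ^(n-2)`. -/
theorem snowflake_embeds_optimal_dimension {H : Type*} [NormedAddCommGroup H]
    [InnerProductSpace ℝ H] [CompleteSpace H]
    (n : ℕ) (hn : 2 ≤ n) (x : Fin n → H) (hx : Function.Injective x)
    (α : ℝ) (hα₀ : 0 < α) (hα₁ : α < 1) :
    (∃ f : Fin n → EuclideanSpace ℝ (Fin (n - 1)),
      ∀ i j, ‖f i - f j‖ = ‖x i - x j‖ ^ α) ∧
    ¬ (∃ f : Fin n → EuclideanSpace ℝ (Fin (n - 2)),
      ∀ i j, ‖f i - f j‖ = ‖x i - x j‖ ^ α) := by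
  classical
  obtain ⟨m, rfl⟩ : ∃ m, n = m + 2 := ⟨n - 2, by omega⟩
  -- the snowflaked squared-distance function
  set η : Fin (m+2) → Fin (m+2) → ℝ := fun i j => (‖x i - x j‖ ^ 2) ^ α with hη
  have hηsymm : ∀ i j, η i j = η j i := by
    intro i j; simp only [hη]; rw [norm_sub_rev]
  have hηdiag : ∀ i, η i i = 0 := by
    intro i
    simp only [hη, sub_self, norm_zero]
    rw [show ((0:ℝ)^2) = 0 by norm_num, Real.zero_rpow (ne_of_gt hα₀)]
  have hηsq : ∀ i j, η i j = (‖x i - x j‖ ^ α) ^ 2 :=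
    fun i j => sq_rpow (norm_nonneg _) α
  -- transfer the key negativity result from a Euclidean copy
  have keyx : ∀ c : Fin (m+2) → ℝ, c ≠ 0 → (∑ i, c i) = 0 →
      ∑ i, ∑ j, c i * c j * η i j < 0 := by
    intro c hc hcs
    obtain ⟨d, y, hy⟩ := exists_euclidean_copy x
    have hyinj : Function.Injective y := by
      intro i j hij
      apply hx
      have h0 : ‖x i - x j‖ = 0 := by rw [← hy i j, hij, sub_self, norm_zero]
      rwa [norm_eq_zero, sub_eq_zero] at h0
    have := key_neg y hyinj hα₀ hα₁ c hc hcs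
    calc ∑ i, ∑ j, c i * c j * η i j
        = ∑ i, ∑ j, c i * c j * (‖y i - y j‖ ^ 2) ^ α := by
          refine Finset.sum_congr rfl fun i _ => Finset.sum_congr rfl fun j _ => ?_
          rw [hη, hy i j]
      _ < 0 := this
  -- positivity of the Gram quadratic form
  set G : Fin (m+1) → Fin (m+1) → ℝ :=
    fun k l => (η k.succ 0 + η l.succ 0 - η k.succ l.succ) / 2 with hG
  have hGdef : ∀ k l, G k l = (η k.succ 0 + η l.succ 0 - η k.succ l.succ) / 2 :=
    fun _ _ => rfl
  have hGpos : ∀ c : Fin (m+1) → ℝ, c ≠ 0 →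
      0 < ∑ k, ∑ l, c k * c l * G k l := by
    intro c hc
    set c' : Fin (m+2) → ℝ := Fin.cons (-(∑ k, c k)) c with hc'
    have hc'sum : ∑ i, c' i = 0 := by
      rw [Fin.sum_univ_succ]
      simp only [hc', Fin.cons_zero, Fin.cons_succ]
      ring
    have hc'ne : c' ≠ 0 := by
      obtain ⟨k, hk⟩ := Function.ne_iff.1 hc
      refine Function.ne_iff.2 ⟨k.succ, ?_⟩
      simpa only [hc', Fin.cons_succ, Pi.zero_apply] using hk
    have hkey := keyx c' hc'ne hc'sum
    have hexp := quad_expand η (hηdiag 0) c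
    rw [← hc'] at hexp
    rw [hexp] at hkey
    have heq : ∑ k, ∑ l, c k * c l * G k l
        = -(1/2) * ∑ k : Fin (m+1), ∑ l : Fin (m+1),
            c k * c l * (η k.succ l.succ - η k.succ 0 - η 0 l.succ) := by
      rw [Finset.mul_sum]
      refine Finset.sum_congr rfl fun k _ => ?_
      rw [Finset.mul_sum]
      refine Finset.sum_congr rfl fun l _ => ?_
      rw [hGdef, hηsymm 0 l.succ]
      ring
    rw [heq]
    nlinarith [hkey]
  constructor
  · -- existence of the embedding into ℝ^(m+1)
    set MG : Matrix (Fin (m+1)) (Fin (m+1)) ℝ := Matrix.of G with hMG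
    have hpsd : MG.PosSemidef := by
      rw [Matrix.posSemidef_iff_dotProduct_mulVec]
      constructor
      · ext k l
        simp only [Matrix.conjTranspose_apply, hMG, Matrix.of_apply, star_trivial]
        rw [hGdef, hGdef, hηsymm k.succ l.succ]
        ring
      · intro v
        have hquad : dotProduct (star v) (MG.mulVec v)
            = ∑ k, ∑ l, v k * v l * G k l := by
          simp only [dotProduct, Matrix.mulVec, star_trivial, Pi.star_apply]
          refine Finset.sum_congr rfl fun k _ => ?_
          rw [Finset.mul_sum]
          refine Finset.sum_congr rfl fun l _ => ?_
          simp only [hMG, Matrix.of_apply]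
          ring
        rw [hquad]
        rcases eq_or_ne v 0 with rfl | hv
        · simp
        · exact (hGpos v hv).le
    open scoped MatrixOrder in obtain ⟨B, hB⟩ := CStarAlgebra.nonneg_iff_eq_star_mul_self.mp hpsd.nonneg
    rw [Matrix.star_eq_conjTranspose] at hB
    set u : Fin (m+1) → EuclideanSpace ℝ (Fin (m+1)) :=
      fun k => (EuclideanSpace.equiv (Fin (m+1)) ℝ).symm (fun t => B t k) with hu
    have huv : ∀ k t, u k t = B t k := fun k t => rfl
    have hinner : ∀ k l, (inner ℝ (u k) (u l) : ℝ) = G k l := by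
      intro k l
      rw [inner_eq_sum]
      have : MG k l = (B.conjTranspose * B) k l := by rw [← hB]
      rw [show G k l = MG k l from rfl, this, Matrix.mul_apply]
      refine Finset.sum_congr rfl fun t _ => ?_
      rw [Matrix.conjTranspose_apply, star_trivial, huv, huv]
    set f : Fin (m+2) → EuclideanSpace ℝ (Fin (m+1)) := Fin.cons 0 u with hf
    refine ⟨f, fun i j => ?_⟩
    have hsq : ‖f i - f j‖ ^ 2 = η i j := by
      induction i using Fin.cases with
      | zero =>
        induction j using Fin.cases with
        | zero => simp [hf, hηdiag]
        | succ l =>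
          simp only [hf, Fin.cons_zero, Fin.cons_succ, zero_sub, norm_neg]
          rw [← real_inner_self_eq_norm_sq, hinner, hGdef, hηdiag, hηsymm 0 l.succ]
          ring
      | succ k =>
        induction j using Fin.cases with
        | zero =>
          simp only [hf, Fin.cons_zero, Fin.cons_succ, sub_zero]
          rw [← real_inner_self_eq_norm_sq, hinner, hGdef, hηdiag]
          ring
        | succ l =>
          simp only [hf, Fin.cons_succ]
          rw [norm_sub_sq_real, ← real_inner_self_eq_norm_sq,
            ← real_inner_self_eq_norm_sq, hinner, hinner, hinner, hGdef, hGdef, hGdef,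
            hηdiag, hηdiag]
          ring
    have h1 : ‖f i - f j‖ = Real.sqrt (η i j) := by
      rw [← hsq, Real.sqrt_sq (norm_nonneg _)]
    rw [h1, hηsq i j, Real.sqrt_sq (Real.rpow_nonneg (norm_nonneg _) α)]
  · -- impossibility of an embedding into ℝ^m
    rintro ⟨f, hf⟩
    have hfsq : ∀ i j, ‖f i - f j‖ ^ 2 = η i j := by
      intro i j
      rw [hf i j, ← hηsq]
    set v : Fin (m+1) → EuclideanSpace ℝ (Fin m) := fun k => f k.succ - f 0 with hv
    have hdep : ¬ LinearIndependent ℝ v := by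
      intro hli
      have := hli.fintype_card_le_finrank
      rw [Fintype.card_fin, finrank_euclideanSpace_fin] at this
      omega
    rw [Fintype.not_linearIndependent_iff] at hdep
    obtain ⟨g, hg0, ⟨k₀, hk₀⟩⟩ := hdep
    have hgne : g ≠ 0 := fun h => hk₀ (by rw [h]; rfl)
    have hvG : ∀ k l, (inner ℝ (v k) (v l) : ℝ) = G k l := by
      intro k l
      have hnorm : ∀ a b : EuclideanSpace ℝ (Fin m),
          (inner ℝ a b : ℝ) = (‖a‖ ^ 2 + ‖b‖ ^ 2 - ‖a - b‖ ^ 2) / 2 := by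
        intro a b
        rw [norm_sub_sq_real]
        ring
      rw [hnorm]
      have h1 : ‖v k‖ ^ 2 = η k.succ 0 := by
        rw [hv]; exact hfsq k.succ 0
      have h2 : ‖v l‖ ^ 2 = η l.succ 0 := by
        rw [hv]; exact hfsq l.succ 0
      have h3 : ‖v k - v l‖ ^ 2 = η k.succ l.succ := by
        have : v k - v l = f k.succ - f l.succ := by
          simp only [hv]; abel
        rw [this]; exact hfsq k.succ l.succ
      rw [h1, h2, h3, hGdef]
    have hzero : ∑ k, ∑ l, g k * g l * G k l = 0 := by
      have : (inner ℝ (∑ k, g k • v k) (∑ l, g l • v l) : ℝ)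
          = ∑ k, ∑ l, g k * g l * G k l := by
        rw [sum_inner]
        refine Finset.sum_congr rfl fun k _ => ?_
        rw [real_inner_smul_left, inner_sum, Finset.mul_sum]
        refine Finset.sum_congr rfl fun l _ => ?_
        rw [real_inner_smul_right, hvG]
        ring
      rw [← this, hg0, inner_zero_left]
    exact absurd hzero (ne_of_gt (hGpos g hgne))
end

section
/- Let x₁, …, xₙ be distinct points in a real inner product space and suppose that for some vector Λ = (λ₁, …, λₙ) with Σᵢλᵢ = 0 and for every λ > 0 we have Σ_{i,j} λᵢλⱼ e^{-λ²‖xᵢ-xⱼ‖²} = 0. Then for every 0 < α < 1, Σ_{i,j} λᵢλⱼ ‖xᵢ-xⱼ‖^{2α} = 0, and moreover Σ_{i≠j} λᵢλⱼ = 0, which forces Λ = 0. -/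
open Finset

/-- Core step of strict negative type: if the Gaussian quadratic form vanishes for all
`λ > 0` at distinct points with coefficients summing to zero, then all snowflaked
quadratic forms vanish, the simplex form vanishes, and the coefficients are zero. -/
theorem gaussian_vanishing_forces_zero {E : Type*} [NormedAddCommGroup E]
    [InnerProductSpace ℝ E] (n : ℕ) (x : Fin n → E) (hx : Function.Injective x)
    (lam : Fin n → ℝ) (hsum : ∑ i, lam i = 0)
    (hvanish : ∀ l : ℝ, 0 < l →
      ∑ i, ∑ j, lam i * lam j * Real.exp (-(l ^ 2) * ‖x i - x j‖ ^ 2) = 0) :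
    (∀ α : ℝ, 0 < α → α < 1 → ∑ i, ∑ j, lam i * lam j * ‖x i - x j‖ ^ (2 * α) = 0) ∧
    (∑ i, ∑ j, lam i * lam j * (if i = j then (0 : ℝ) else 1)) = 0 ∧
    lam = 0 := by
  have hlam : lam = 0 := by
    set f : ℝ → ℝ := fun l =>
      ∑ i, ∑ j, lam i * lam j * Real.exp (-(l ^ 2) * ‖x i - x j‖ ^ 2) with hf
    have hterm : ∀ i j : Fin n, Filter.Tendsto
        (fun l : ℝ => lam i * lam j * Real.exp (-(l ^ 2) * ‖x i - x j‖ ^ 2))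
        Filter.atTop (nhds (if i = j then lam i ^ 2 else 0)) := by
      intro i j
      by_cases hij : i = j
      · subst hij
        simp only [sub_self, norm_zero, if_pos rfl]
        norm_num
        simp [sq]
      · have hc : (0 : ℝ) < ‖x i - x j‖ ^ 2 := by
          have hne : x i - x j ≠ 0 := sub_ne_zero.mpr fun h => hij (hx h)
          exact pow_pos (norm_pos_iff.mpr hne) 2
        have h1 : Filter.Tendsto (fun l : ℝ => -(l ^ 2) * ‖x i - x j‖ ^ 2)
            Filter.atTop Filter.atBot := by
          have h2 : Filter.Tendsto (fun l : ℝ => l ^ 2 * ‖x i - x j‖ ^ 2)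
              Filter.atTop Filter.atTop :=
            (Filter.tendsto_pow_atTop two_ne_zero).atTop_mul_const hc
          simpa [Function.comp_def, neg_mul] using Filter.tendsto_neg_atTop_atBot.comp h2
        have h3 : Filter.Tendsto
            (fun l : ℝ => Real.exp (-(l ^ 2) * ‖x i - x j‖ ^ 2))
            Filter.atTop (nhds 0) := Real.tendsto_exp_atBot.comp h1
        simpa [if_neg hij] using (h3.const_mul (lam i * lam j))
    have hS : Filter.Tendsto f Filter.atTop (nhds (∑ i, lam i ^ 2)) := by
      have : Filter.Tendsto f Filter.atTop
          (nhds (∑ i, ∑ j, if i = j then lam i ^ 2 else 0)) := by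
        apply tendsto_finset_sum
        intro i _
        exact tendsto_finset_sum _ fun j _ => hterm i j
      simpa using this
    have h0 : Filter.Tendsto f Filter.atTop (nhds 0) := by
      apply Filter.Tendsto.congr' _ tendsto_const_nhds
      filter_upwards [Filter.Ioi_mem_atTop (0 : ℝ)] with l hl
      exact (hvanish l hl).symm
    have hSzero : ∑ i, lam i ^ 2 = 0 := tendsto_nhds_unique hS h0
    funext i
    have := (Finset.sum_eq_zero_iff_of_nonneg (fun j _ => sq_nonneg (lam j))).mp
      hSzero i (mem_univ i)
    simpa using (pow_eq_zero_iff two_ne_zero).mp this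
  subst hlam
  refine ⟨fun α _ _ => ?_, ?_, rfl⟩ <;> simp
end

section
/- Let X = {x₁, …, xₙ} be an n-point metric space whose squared distance matrix satisfies the strict negative-type inequalities: Λ D Λᵀ < 0 for every nonzero Λ ∈ ℝⁿ with Σλᵢ = 0, where D_{ij} = d(xᵢ,xⱼ)². Then in any isometric embedding f of X into a Euclidean space, the points f(x₁), …, f(xₙ) are affinely independent; in particular X does not embed isometrically into ℝ^{n-2}. -/
open Finset

/-- If a finite metric space satisfies the strict negative-type inequalities for its
squared distance matrix, then the image of any isometric embedding into a Euclidean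
space is affinely independent; in particular (for `n ≥ 2`) it does not embed
isometrically into `ℝ^(n-2)`. -/
theorem strict_negType_implies_affineIndependent {X : Type*} [MetricSpace X]
    (n : ℕ) (hn : 2 ≤ n) (x : Fin n → X)
    (hstrict : ∀ lam : Fin n → ℝ, lam ≠ 0 → ∑ i, lam i = 0 →
      ∑ i, ∑ j, lam i * lam j * dist (x i) (x j) ^ 2 < 0) :
    (∀ k : ℕ, ∀ f : Fin n → EuclideanSpace ℝ (Fin k),
      (∀ i j, dist (f i) (f j) = dist (x i) (x j)) → AffineIndependent ℝ f) ∧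
    ¬ ∃ f : Fin n → EuclideanSpace ℝ (Fin (n - 2)),
      ∀ i j, dist (f i) (f j) = dist (x i) (x j) := by
  have main : ∀ k : ℕ, ∀ f : Fin n → EuclideanSpace ℝ (Fin k),
      (∀ i j, dist (f i) (f j) = dist (x i) (x j)) → AffineIndependent ℝ f := by
    intro k f hf
    rw [affineIndependent_iff]
    intro s w hw hsum e he
    by_contra hwe
    set lam : Fin n → ℝ := fun i => if i ∈ s then w i else 0 with hlam
    have hlam_ne : lam ≠ 0 := by
      intro h
      apply hwe
      have := congrFun h e
      simpa [hlam, he] using this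
    have hsum0 : ∑ i, lam i = 0 := by
      rw [← hw]
      simp [hlam, Finset.sum_ite_mem]
    have hvec : ∑ i, lam i • f i = 0 := by
      rw [← hsum]
      simp [hlam, Finset.sum_ite_mem, ite_smul]
    have hinner := inner_sum_smul_sum_smul_of_sum_eq_zero (s₁ := Finset.univ)
      (w₁ := lam) f hsum0 (s₂ := Finset.univ) (w₂ := lam) f hsum0
    rw [hvec, inner_zero_left] at hinner
    have hzero : ∑ i, ∑ j, lam i * lam j * (‖f i - f j‖ * ‖f i - f j‖) = 0 := by
      field_simp at hinner
      simp only [← pow_two]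
      linarith [hinner]
    have := hstrict lam hlam_ne hsum0
    rw [show (∑ i, ∑ j, lam i * lam j * dist (x i) (x j) ^ 2) =
        ∑ i, ∑ j, lam i * lam j * (‖f i - f j‖ * ‖f i - f j‖) by
      refine Finset.sum_congr rfl fun i _ => Finset.sum_congr rfl fun j _ => ?_
      rw [← hf i j, dist_eq_norm, pow_two]] at this
    rw [hzero] at this
    exact lt_irrefl 0 this
  refine ⟨main, ?_⟩
  rintro ⟨f, hf⟩
  have hai := main (n - 2) f hf
  have h1 := hai.card_le_finrank_succ
  have h2 : Module.finrank ℝ (vectorSpan ℝ (Set.range f)) ≤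
      Module.finrank ℝ (EuclideanSpace ℝ (Fin (n - 2))) := Submodule.finrank_le _
  rw [finrank_euclideanSpace_fin] at h2
  simp only [Fintype.card_fin] at h1
  omega
end
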